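/- arXiv:0908.3448 — 10 statements merged into one kernel-verified Lean document; each statement's English description precedes it below -/
import Mathlib

section
/- For 2 ≤ p ≤ m−2, s(m,p) ≤ p−1: there is no p × m matrix over Z/2 such that every p of its columns span (Z/2)^p. -/
open Matrix Finset

/-- Every `p` columns of `A` span `(ZMod 2)^k`. -/
def SpanProp (k m p : ℕ) (A : Matrix (Fin k) (Fin m) (ZMod 2)) : Prop :=
  ∀ S : Finset (Fin m), S.card = p →
    Submodule.span (ZMod 2) (Aᵀ '' (S : Set (Fin m))) = ⊤

lemma key_card {k m : ℕ} (A : Matrix (Fin k) (Fin m) (ZMod 2)) (B : Finset (Fin m))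
    (h : Submodule.span (ZMod 2) (Aᵀ '' (B : Set (Fin m))) = ⊤) :
    k ≤ (B.image Aᵀ).card := by
  have himg : Aᵀ '' (B : Set (Fin m)) = ((B.image Aᵀ : Finset (Fin k → ZMod 2)) : Set (Fin k → ZMod 2)) := by
    exact Finset.coe_image.symm
  rw [himg] at h
  calc k = Module.finrank (ZMod 2) (Fin k → ZMod 2) := (Module.finrank_fin_fun _).symm
    _ = Module.finrank (ZMod 2) (Submodule.span (ZMod 2)
          ((B.image Aᵀ : Finset (Fin k → ZMod 2)) : Set (Fin k → ZMod 2))) := by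
        rw [h, finrank_top]
    _ ≤ (B.image Aᵀ).card := finrank_span_finset_le_card _

lemma k_le_p {k m p : ℕ} (hpm : p ≤ m) (A : Matrix (Fin k) (Fin m) (ZMod 2))
    (h : SpanProp k m p A) : k ≤ p := by
  obtain ⟨S, -, hS⟩ := Finset.exists_subset_card_eq (show p ≤ (Finset.univ : Finset (Fin m)).card by simpa)
  calc k ≤ (S.image Aᵀ).card := key_card A S (h S hS)
    _ ≤ S.card := Finset.card_image_le
    _ = p := hS

lemma no_p {m p : ℕ} (hp : 2 ≤ p) (hpm : p + 2 ≤ m) :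
    ¬ ∃ A : Matrix (Fin p) (Fin m) (ZMod 2), SpanProp p m p A := by
  rintro ⟨A, h⟩
  have hpm' : p ≤ m := by omega
  -- injectivity on card-p sets
  have hinj : ∀ T : Finset (Fin m), T.card = p → Set.InjOn Aᵀ ↑T := by
    intro T hT
    apply Finset.injOn_of_card_image_eq
    have h1 := key_card A T (h T hT)
    have h2 : (T.image Aᵀ).card ≤ T.card := Finset.card_image_le
    omega
  have hginj : Function.Injective Aᵀ := by
    intro i j hij
    by_contra hne
    obtain ⟨T, hsub, hT⟩ := Finset.exists_superset_card_eq (s := {i, j}) (n := p)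
      (by rw [Finset.card_insert_of_notMem (by simpa using hne), Finset.card_singleton]; exact hp)
      (by simpa using hpm')
    exact hne (hinj T hT (hsub (by simp)) (hsub (by simp)) hij)
  -- for S card p and j ∉ S: Aᵀ j = ∑ i in S, Aᵀ i
  have hsum : ∀ S : Finset (Fin m), S.card = p → ∀ j ∉ S, Aᵀ j = ∑ i ∈ S, Aᵀ i := by
    intro S hS j hj
    have hspan := h S hS
    rw [show Aᵀ '' (S : Set (Fin m)) = ((S.image Aᵀ : Finset (Fin p → ZMod 2)) : Set (Fin p → ZMod 2)) from Finset.coe_image.symm] at hspan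
    have hmem : Aᵀ j ∈ Submodule.span (ZMod 2) ((S.image Aᵀ : Finset _) : Set _) := by
      rw [hspan]; exact Submodule.mem_top
    obtain ⟨f, -, hf⟩ := Submodule.mem_span_finset.mp hmem
    have hf' : ∑ i ∈ S, f (Aᵀ i) • Aᵀ i = Aᵀ j := by
      rw [← hf, Finset.sum_image (fun x hx y hy => hinj S hS hx hy)]
    have hone : ∀ i ∈ S, f (Aᵀ i) = 1 := by
      intro i0 hi0
      by_contra hc
      have hc0 : f (Aᵀ i0) = 0 := by
        have : ∀ c : ZMod 2, c ≠ 1 → c = 0 := by decide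
        exact this _ hc
      -- Aᵀ j lies in the span of the other p - 1 columns of S
      have hsub : Aᵀ j ∈ Submodule.span (ZMod 2) (Aᵀ '' ↑(S.erase i0)) := by
        rw [← hf', ← Finset.add_sum_erase S _ hi0, hc0, zero_smul, zero_add]
        exact Submodule.sum_mem _ fun i hi => Submodule.smul_mem _ _
          (Submodule.subset_span ⟨i, Finset.mem_coe.mpr hi, rfl⟩)
      have hjE : j ∉ S.erase i0 := fun hmem => hj (Finset.erase_subset _ _ hmem)
      have hTcard : (insert j (S.erase i0)).card = p := by
        rw [Finset.card_insert_of_notMem hjE, Finset.card_erase_of_mem hi0, hS]; omega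
      have htop := h _ hTcard
      have hle : Submodule.span (ZMod 2) (Aᵀ '' ↑(insert j (S.erase i0))) ≤
          Submodule.span (ZMod 2) (Aᵀ '' ↑(S.erase i0)) := by
        rw [Submodule.span_le]
        rintro x ⟨i, hi, rfl⟩
        rcases Finset.mem_insert.mp (Finset.mem_coe.mp hi) with rfl | hi'
        · exact hsub
        · exact Submodule.subset_span ⟨i, Finset.mem_coe.mpr hi', rfl⟩
      rw [htop] at hle
      have hk := key_card A (S.erase i0) (top_le_iff.mp hle)
      have hc1 : ((S.erase i0).image Aᵀ).card ≤ (S.erase i0).card := Finset.card_image_le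
      have hc2 : (S.erase i0).card = p - 1 := by rw [Finset.card_erase_of_mem hi0, hS]
      omega
    rw [← hf']
    exact Finset.sum_congr rfl fun i hi => by rw [hone i hi, one_smul]
  -- conclude
  obtain ⟨S, -, hS⟩ := Finset.exists_subset_card_eq
    (show p ≤ (Finset.univ : Finset (Fin m)).card by simpa)
  have hcompl : 1 < Sᶜ.card := by
    rw [Finset.card_compl, hS]; simp only [Fintype.card_fin]; omega
  obtain ⟨a, ha, b, hb, hab⟩ := Finset.one_lt_card.mp hcompl
  have h1 := hsum S hS a (Finset.mem_compl.mp ha)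
  have h2 := hsum S hS b (Finset.mem_compl.mp hb)
  exact hab (hginj (h1.trans h2.symm))

/-- The Buchstaber-type invariant: the maximum `k` such that some `k × m`
matrix over `ZMod 2` has every `p` columns spanning. -/
noncomputable def s (m p : ℕ) : ℕ :=
  sSup {k : ℕ | ∃ A : Matrix (Fin k) (Fin m) (ZMod 2), SpanProp k m p A}

/-- `mk k b`: maximum of `∑ a_v` over nonneg integer tuples indexed by nonzero
vectors of `(ZMod 2)^k` satisfying `∑_{(u,v)=0} a_v ≤ b` for each nonzero `u`. -/
noncomputable def mkInv (k b : ℕ) : ℕ :=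
  sSup {m : ℕ | ∃ a : (Fin k → ZMod 2) → ℕ,
    (∀ u : Fin k → ZMod 2, u ≠ 0 →
      ∑ v ∈ Finset.univ.filter
        (fun v : Fin k → ZMod 2 => v ≠ 0 ∧ dotProduct u v = 0), a v ≤ b) ∧
    ∑ v ∈ Finset.univ.filter (fun v : Fin k → ZMod 2 => v ≠ 0), a v = m}

theorem s_le_p_sub_one (m p : ℕ) (hp : 2 ≤ p) (hpm : p + 2 ≤ m) :
    s m p ≤ p - 1 ∧ ¬ ∃ A : Matrix (Fin p) (Fin m) (ZMod 2), SpanProp p m p A := by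
  refine ⟨?_, no_p hp hpm⟩
  apply csSup_le
  · exact ⟨0, (0 : Matrix (Fin 0) (Fin m) (ZMod 2)), fun S hS => Subsingleton.elim _ _⟩
  · rintro k ⟨A, hA⟩
    have hk : k ≤ p := k_le_p (by omega) A hA
    rcases eq_or_lt_of_le hk with rfl | hlt
    · exact absurd ⟨A, hA⟩ (no_p hp hpm)
    · omega
end

section
/- Suppose A = (a_1, …, a_m) is a k × m matrix over Z/2 (with m ≥ p ≥ 1) such that any p of its columns span (Z/2)^k. Let b = a_1 + ⋯ + a_m and let B be the k × (m+1) matrix with columns a_1, …, a_m, b. If m − p is even, then any p columns of B span (Z/2)^k. -/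
open Matrix Finset

lemma span_top_iff_dot {n : ℕ} (s : Set (Fin n → ZMod 2)) :
    Submodule.span (ZMod 2) s = ⊤ ↔
      ∀ u : Fin n → ZMod 2, (∀ x ∈ s, dotProduct u x = 0) → u = 0 := by
  constructor
  · intro h u hu
    have key : ∀ x : Fin n → ZMod 2, dotProduct u x = 0 := by
      intro x
      have hx : x ∈ Submodule.span (ZMod 2) s := h ▸ Submodule.mem_top
      induction hx using Submodule.span_induction with
      | mem x hx => exact hu x hx
      | zero => simp
      | add x y _ _ hx hy => rw [dotProduct_add, hx, hy, add_zero]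
      | smul c x _ hx => rw [dotProduct_smul, hx, smul_zero]
    funext i
    have := key (Pi.single i 1)
    simpa [dotProduct, Pi.single_apply, Finset.mul_sum] using this
  · intro h
    by_contra hne
    obtain ⟨φ, φ0, hφ⟩ := Submodule.exists_dual_map_eq_bot_of_lt_top
      (p := Submodule.span (ZMod 2) s) (lt_top_iff_ne_top.mpr hne) inferInstance
    set u : Fin n → ZMod 2 := fun i => φ (Pi.single i 1) with hu
    have hφu : ∀ x, φ x = dotProduct u x := by
      intro x
      have hx : x = ∑ i, x i • Pi.single i (1 : ZMod 2) := by
        ext j; simp [Pi.single_apply]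
      rw [dotProduct]
      conv_lhs => rw [hx]
      rw [map_sum]
      refine Finset.sum_congr rfl fun i _ => ?_
      rw [LinearMap.map_smul, smul_eq_mul, mul_comm]
    have hzero : ∀ x ∈ s, dotProduct u x = 0 := by
      intro x hx
      rw [← hφu]
      have : φ x ∈ Submodule.map φ (Submodule.span (ZMod 2) s) :=
        Submodule.mem_map_of_mem (Submodule.subset_span hx)
      rw [hφ] at this
      simpa using this
    have hu0 : u = 0 := h u hzero
    apply φ0
    apply LinearMap.ext
    intro x
    rw [hφu, hu0]
    simp

theorem spanProp_extend (k m p : ℕ) (hp : 1 ≤ p) (hpm : p ≤ m)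
    (A : Matrix (Fin k) (Fin m) (ZMod 2)) (hA : SpanProp k m p A)
    (hpar : m % 2 = p % 2) :
    SpanProp k (m + 1) p
      (Matrix.of fun i (j : Fin (m + 1)) =>
        if h : (j : ℕ) < m then A i ⟨j, h⟩ else ∑ l, A i l) := by
  intro S hS
  rw [span_top_iff_dot]
  intro u hu
  by_contra hune
  set B : Matrix (Fin k) (Fin (m + 1)) (ZMod 2) :=
    Matrix.of fun i (j : Fin (m + 1)) =>
      if h : (j : ℕ) < m then A i ⟨j, h⟩ else ∑ l, A i l with hB
  have hu' : ∀ j ∈ S, dotProduct u (Bᵀ j) = 0 := fun j hj => hu _ ⟨j, hj, rfl⟩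
  set Z : Finset (Fin m) :=
    Finset.univ.filter (fun j => dotProduct u (Aᵀ j) = 0) with hZdef
  -- any nonzero u annihilates fewer than p columns of A
  have hZcard : Z.card < p := by
    by_contra hc
    push_neg at hc
    obtain ⟨T, hTZ, hTc⟩ := Finset.exists_subset_card_eq hc
    have := (span_top_iff_dot (Aᵀ '' (T : Set (Fin m)))).mp (hA T hTc) u ?_
    · exact hune this
    · rintro x ⟨j, hj, rfl⟩
      have : j ∈ Z := hTZ hj
      simpa [hZdef] using this
  -- columns of S below m correspond to elements of Z
  set T : Finset (Fin m) := Finset.univ.filter (fun j => j.castSucc ∈ S) with hTdef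
  have hTZ : T ⊆ Z := by
    intro j hj
    have hjS : j.castSucc ∈ S := by simpa [hTdef] using hj
    have h1 : dotProduct u (Bᵀ j.castSucc) = 0 := hu' _ hjS
    have h2 : (Bᵀ j.castSucc) = Aᵀ j := by
      funext i
      have hlt : ((j.castSucc : Fin (m+1)) : ℕ) < m := j.isLt
      simp only [Matrix.transpose_apply, hB, Matrix.of_apply, dif_pos hlt]
      congr 1
    rw [h2] at h1
    simpa [hZdef] using h1
  have hTerase : S.erase (Fin.last m) = T.image Fin.castSucc := by
    ext j'
    simp only [Finset.mem_erase, Finset.mem_image, hTdef, Finset.mem_filter,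
      Finset.mem_univ, true_and]
    constructor
    · rintro ⟨hne, hjS⟩
      obtain ⟨j, rfl⟩ := Fin.exists_castSucc_eq.mpr hne
      exact ⟨j, hjS, rfl⟩
    · rintro ⟨j, hjS, rfl⟩
      exact ⟨(Fin.castSucc_lt_last j).ne, hjS⟩
  have hTcard : (S.erase (Fin.last m)).card = T.card := by
    rw [hTerase, Finset.card_image_of_injective _ (Fin.castSucc_injective m)]
  by_cases hlast : Fin.last m ∈ S
  · -- S contains the last column
    have hTc : T.card = p - 1 := by
      rw [← hTcard, Finset.card_erase_of_mem hlast, hS]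
    have hZc : Z.card = p - 1 := by
      have := Finset.card_le_card hTZ
      omega
    -- compute u ⬝ b
    have hb : dotProduct u (Bᵀ (Fin.last m)) = ∑ l, dotProduct u (Aᵀ l) := by
      have hnl : ¬ ((Fin.last m : Fin (m+1)) : ℕ) < m := by simp
      simp only [dotProduct, Matrix.transpose_apply, hB, Matrix.of_apply,
        dif_neg hnl, Finset.mul_sum]
      exact Finset.sum_comm
    have hsplit : ∑ l, dotProduct u (Aᵀ l)
        = ∑ l ∈ Zᶜ, dotProduct u (Aᵀ l) := by
      rw [← Finset.sum_add_sum_compl Z]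
      have : ∑ l ∈ Z, dotProduct u (Aᵀ l) = 0 := by
        refine Finset.sum_eq_zero fun l hl => ?_
        simpa [hZdef] using hl
      rw [this, zero_add]
    have hone : ∀ x : ZMod 2, x ≠ 0 → x = 1 := by decide
    have hsum1 : ∑ l ∈ Zᶜ, dotProduct u (Aᵀ l) = (Zᶜ.card : ZMod 2) := by
      rw [Finset.sum_congr rfl (fun l hl => hone _ ?_)]
      · simp
      · have : l ∉ Z := by simpa using hl
        simpa [hZdef] using this
    have hcc : Zᶜ.card = m - (p - 1) := by
      have := Finset.card_compl Z
      simp only [Fintype.card_fin] at this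
      omega
    have hodd : (m - (p - 1)) % 2 = 1 := by omega
    have hcast : ((m - (p - 1) : ℕ) : ZMod 2) = 1 := by
      rw [← ZMod.natCast_mod, hodd, Nat.cast_one]
    have : dotProduct u (Bᵀ (Fin.last m)) = 1 := by
      rw [hb, hsplit, hsum1, hcc, hcast]
    rw [hu' _ hlast] at this
    exact one_ne_zero this.symm
  · -- S avoids the last column
    have hTc : T.card = p := by
      rw [← hTcard, Finset.erase_eq_of_notMem hlast, hS]
    have := Finset.card_le_card hTZ
    omega
end

section
/- If m − p is even and 1 ≤ p ≤ m, then s(m,p) = s(m+1,p), where s(m,p) is the maximum k for which some k × m matrix over Z/2 has every p columns spanning (Z/2)^k. -/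
open Matrix Finset

lemma pi_eq_sum_single {k : ℕ} (x : Fin k → ZMod 2) :
    x = ∑ i, x i • Pi.single i (1 : ZMod 2) := by
  funext j
  simp [Pi.single_apply, Finset.sum_apply]

lemma exists_orth_of_ne_top {k : ℕ} {W : Submodule (ZMod 2) (Fin k → ZMod 2)} (hW : W ≠ ⊤) :
    ∃ u : Fin k → ZMod 2, u ≠ 0 ∧ ∀ x ∈ W, dotProduct u x = 0 := by
  obtain ⟨f, hf, hbot⟩ := W.exists_dual_map_eq_bot_of_lt_top (lt_top_iff_ne_top.mpr hW)
    inferInstance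
  refine ⟨fun i => f (Pi.single i 1), ?_, ?_⟩
  · intro h0
    apply hf
    refine LinearMap.ext fun x => ?_
    rw [pi_eq_sum_single x, map_sum]
    simp only [_root_.map_smul]
    have := congrFun h0
    simp only [Pi.zero_apply] at this
    simp [this]
  · intro x hx
    have hfx : f x = 0 := by
      have : f x ∈ W.map f := Submodule.mem_map_of_mem hx
      rw [hbot] at this
      simpa using this
    rw [← hfx]
    conv_rhs => rw [pi_eq_sum_single x]
    rw [map_sum]
    simp only [_root_.map_smul, smul_eq_mul]
    simp [dotProduct, mul_comm]

/-- under `SpanProp`, every hyperplane contains at most `p-1` columns. -/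
lemma card_orth_le {k m p : ℕ} (hp : 1 ≤ p) {A : Matrix (Fin k) (Fin m) (ZMod 2)}
    (hA : SpanProp k m p A) {u : Fin k → ZMod 2} (hu : u ≠ 0) :
    (Finset.univ.filter (fun j : Fin m => dotProduct u (Aᵀ j) = 0)).card ≤ p - 1 := by
  by_contra hc
  push_neg at hc
  have hple : p ≤ (Finset.univ.filter
      (fun j : Fin m => dotProduct u (Aᵀ j) = 0)).card := by omega
  obtain ⟨S, hS, hScard⟩ := Finset.exists_subset_card_eq hple
  have hspan := hA S hScard
  -- the linear functional x ↦ u ⬝ x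
  let f : (Fin k → ZMod 2) →ₗ[ZMod 2] ZMod 2 :=
    { toFun := fun x => dotProduct u x
      map_add' := fun x y => dotProduct_add u x y
      map_smul' := fun c x => by simp [dotProduct_smul] }
  have hle : Submodule.span (ZMod 2) (Aᵀ '' (S : Set (Fin m))) ≤ LinearMap.ker f := by
    rw [Submodule.span_le]
    rintro x ⟨j, hj, rfl⟩
    have := hS hj
    rw [Finset.mem_filter] at this
    simpa [f, LinearMap.mem_ker] using this.2
  rw [hspan, top_le_iff] at hle
  apply hu
  funext i
  rw [LinearMap.ker_eq_top] at hle
  have : f (Pi.single i 1) = 0 := by rw [hle]; rfl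
  simpa [f, dotProduct_single] using this

lemma spanProp_snoc {k m p : ℕ} (hp : 1 ≤ p) (hpm : p ≤ m) (hpar : m % 2 = p % 2)
    {A : Matrix (Fin k) (Fin m) (ZMod 2)} (hA : SpanProp k m p A) :
    SpanProp k (m + 1) p (fun i => Fin.snoc (A i) (∑ j, A i j)) := by
  intro S hS
  by_contra hne
  obtain ⟨u, hu, horth⟩ := exists_orth_of_ne_top hne
  set A' : Matrix (Fin k) (Fin (m + 1)) (ZMod 2) := fun i => Fin.snoc (A i) (∑ j, A i j)
    with hA'def
  have hcols : ∀ j ∈ S, dotProduct u (A'ᵀ j) = 0 := fun j hj =>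
    horth _ (Submodule.subset_span ⟨j, hj, rfl⟩)
  have hm : 0 < m := lt_of_lt_of_le hp hpm
  set Z : Finset (Fin m) :=
    Finset.univ.filter (fun j : Fin m => dotProduct u (Aᵀ j) = 0) with hZdef
  have hz : Z.card ≤ p - 1 := card_orth_le hp hA hu
  have hzm : Z.card ≤ m := le_trans (Finset.card_filter_le _ _) (by simp)
  let g : Fin (m + 1) → Fin m := fun j => if h : (j : ℕ) < m then ⟨j, h⟩ else ⟨0, hm⟩
  have hgcast : ∀ j : Fin (m + 1), (j : ℕ) < m → Fin.castSucc (g j) = j := by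
    intro j hj
    simp only [g, dif_pos hj]
    ext
    simp
  have hAcol : ∀ j : Fin m, A'ᵀ (Fin.castSucc j) = Aᵀ j := by
    intro j
    funext i
    exact Fin.snoc_castSucc (α := fun _ => ZMod 2) _ _ _
  have hgZ : ∀ j ∈ S, (j : ℕ) < m → g j ∈ Z := by
    intro j hj hjm
    rw [hZdef, Finset.mem_filter]
    refine ⟨Finset.mem_univ _, ?_⟩
    rw [← hAcol (g j), hgcast j hjm]
    exact hcols j hj
  have hginj : ∀ a ∈ S, (a : ℕ) < m → ∀ b ∈ S, (b : ℕ) < m → g a = g b → a = b := by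
    intro a _ ha b _ hb hab
    have := congrArg Fin.val hab
    simp only [g, dif_pos ha, dif_pos hb] at this
    exact Fin.ext this
  by_cases hlast : Fin.last m ∈ S
  · -- card bound: p - 1 ≤ Z.card
    have hlb : p - 1 ≤ Z.card := by
      have := Finset.card_le_card_of_injOn g
        (fun j hj => hgZ j (Finset.mem_of_mem_erase hj)
          (Fin.val_lt_last (Finset.ne_of_mem_erase hj)))
        (fun a ha b hb hab => hginj a (Finset.mem_of_mem_erase ha)
          (Fin.val_lt_last (Finset.ne_of_mem_erase ha)) b (Finset.mem_of_mem_erase hb)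
          (Fin.val_lt_last (Finset.ne_of_mem_erase hb)) hab)
      rwa [Finset.card_erase_of_mem hlast, hS] at this
    -- parity
    have hsum0 : ∑ j : Fin m, dotProduct u (Aᵀ j) = 0 := by
      have h0 := hcols (Fin.last m) hlast
      have hlastcol : A'ᵀ (Fin.last m) = fun i => ∑ j, A i j := by
        funext i
        exact Fin.snoc_last (α := fun _ => ZMod 2) _ _
      rw [hlastcol] at h0
      rw [← h0]
      simp only [dotProduct, Matrix.transpose_apply, Finset.mul_sum]
      rw [Finset.sum_comm]
    rw [← Finset.sum_filter_add_sum_filter_not Finset.univ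
      (fun j : Fin m => dotProduct u (Aᵀ j) = 0)] at hsum0
    have hone : ∀ x : ZMod 2, x ≠ 0 → x = 1 := by decide
    have hz0 : ∑ j ∈ Z, dotProduct u (Aᵀ j) = 0 := by
      refine Finset.sum_eq_zero fun j hj => ?_
      exact (Finset.mem_filter.mp hj).2
    have hz1 : ∑ j ∈ Finset.univ.filter
        (fun j : Fin m => ¬ dotProduct u (Aᵀ j) = 0), dotProduct u (Aᵀ j)
        = ((m - Z.card : ℕ) : ZMod 2) := by
      have hcardeq : (Finset.univ.filter
          (fun j : Fin m => ¬ dotProduct u (Aᵀ j) = 0)).card = m - Z.card := by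
        rw [Finset.filter_not, Finset.card_sdiff_of_subset (Finset.filter_subset _ _),
          Finset.card_univ, Fintype.card_fin, hZdef]
      calc ∑ j ∈ Finset.univ.filter
            (fun j : Fin m => ¬ dotProduct u (Aᵀ j) = 0), dotProduct u (Aᵀ j)
          = ∑ _j ∈ Finset.univ.filter
            (fun j : Fin m => ¬ dotProduct u (Aᵀ j) = 0), (1 : ZMod 2) :=
            Finset.sum_congr rfl fun j hj => hone _ (Finset.mem_filter.mp hj).2
        _ = ((m - Z.card : ℕ) : ZMod 2) := by
            rw [Finset.sum_const, hcardeq]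
            simp
    rw [hz0, hz1, zero_add] at hsum0
    have hdvd : 2 ∣ m - Z.card := (ZMod.natCast_eq_zero_iff _ _).mp hsum0
    omega
  · have hub : p ≤ Z.card := by
      have hvlt : ∀ j ∈ S, (j : ℕ) < m := by
        intro j hj
        exact Fin.val_lt_last (fun h => hlast (h ▸ hj))
      have := Finset.card_le_card_of_injOn g (fun j hj => hgZ j hj (hvlt j hj))
        (fun a ha b hb hab => hginj a ha (hvlt a ha) b hb (hvlt b hb) hab)
      rwa [hS] at this
    omega

theorem s_succ_of_even_diff (m p : ℕ) (hp : 1 ≤ p) (hpm : p ≤ m)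
    (hpar : m % 2 = p % 2) : s m p = s (m + 1) p := by
  unfold s
  congr 1
  ext k
  simp only [Set.mem_setOf_eq]
  constructor
  · rintro ⟨A, hA⟩
    exact ⟨_, spanProp_snoc hp hpm hpar hA⟩
  · rintro ⟨A, hA⟩
    refine ⟨fun i j => A i (Fin.castSucc j), fun S hS => ?_⟩
    have h := hA (S.map Fin.castSuccEmb) (by rw [Finset.card_map, hS])
    rw [← h]
    congr 1
    rw [Finset.coe_map]
    refine Eq.trans ?_ (Set.image_image _ _ _).symm
    rfl
end

section
/- For m ≥ 3, s(m, m−2) = ⌊m − log₂(m+1)⌋; equivalently, the maximal k for which there exists a k × m matrix over Z/2 in which any m−2 columns span (Z/2)^k is the greatest integer k satisfying k ≤ 2^{m−k} − 1 − m + k, i.e. 2^{m−k} ≥ m + 1. -/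
open Matrix Finset

lemma span_eq_top_of_dot {k : ℕ} (V : Set (Fin k → ZMod 2))
    (h : ∀ u : Fin k → ZMod 2, u ≠ 0 → ∃ x ∈ V, dotProduct u x ≠ 0) :
    Submodule.span (ZMod 2) V = ⊤ := by
  by_contra hne
  obtain ⟨f, hf0, hker⟩ := (Submodule.span (ZMod 2) V).exists_le_ker_of_lt_top
    (lt_top_iff_ne_top.mpr hne)
  set u : Fin k → ZMod 2 := fun i => f (Pi.single i 1) with hu
  have hfx : ∀ x, f x = dotProduct u x := by
    intro x
    rw [LinearMap.pi_apply_eq_sum_univ f x]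
    simp only [dotProduct, hu]
    refine Finset.sum_congr rfl fun i _ => ?_
    rw [smul_eq_mul, mul_comm]
    congr 1
    congr 1
    ext j
    simp [Pi.single_apply, eq_comm]
  have hune : u ≠ 0 := by
    intro h0
    apply hf0
    apply LinearMap.ext
    intro x
    rw [hfx, h0]
    simp
  obtain ⟨x, hxV, hx⟩ := h u hune
  exact hx (by rw [← hfx]; exact hker (Submodule.subset_span hxV))

lemma dot_eq_zero_of_span_top {k : ℕ} (V : Set (Fin k → ZMod 2))
    (hV : Submodule.span (ZMod 2) V = ⊤) (u : Fin k → ZMod 2)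
    (h : ∀ x ∈ V, dotProduct u x = 0) : u = 0 := by
  set f : (Fin k → ZMod 2) →ₗ[ZMod 2] ZMod 2 :=
    { toFun := fun x => dotProduct u x
      map_add' := fun x y => dotProduct_add u x y
      map_smul' := fun c x => by simp [dotProduct_smul] }
  have hker : Submodule.span (ZMod 2) V ≤ LinearMap.ker f := by
    rw [Submodule.span_le]
    intro x hx
    exact h x hx
  rw [hV, top_le_iff] at hker
  ext i
  have : f (Pi.single i 1) = 0 := by
    rw [← LinearMap.mem_ker, hker]; trivial
  simpa [f, dotProduct, Pi.single_apply, eq_comm] using this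

/-- minimum weight ≥ 3 from SpanProp -/
lemma wt_ge_three {k m : ℕ} (hm : 3 ≤ m) (A : Matrix (Fin k) (Fin m) (ZMod 2))
    (hA : SpanProp k m (m - 2) A) (u : Fin k → ZMod 2) (hu : u ≠ 0) :
    3 ≤ (Finset.univ.filter fun j => (u ᵥ* A) j ≠ 0).card := by
  by_contra hlt
  push_neg at hlt
  set N := Finset.univ.filter fun j => (u ᵥ* A) j ≠ 0 with hN
  have hNle : N.card ≤ 2 := by omega
  obtain ⟨T, hNT, hT⟩ := Finset.exists_superset_card_eq hNle (by
    simpa using (by omega : 2 ≤ m))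
  have hScard : Tᶜ.card = m - 2 := by
    rw [Finset.card_compl, hT]; simp
  have hspan := hA Tᶜ hScard
  apply hu
  apply dot_eq_zero_of_span_top _ hspan
  rintro x ⟨j, hj, rfl⟩
  simp only [Finset.coe_compl, Set.mem_compl_iff, Finset.mem_coe] at hj
  have hjN : j ∉ N := fun h => hj (hNT h)
  simp only [hN, Finset.mem_filter, Finset.mem_univ, true_and, not_not] at hjN
  have : (u ᵥ* A) j = dotProduct u (Aᵀ j) := by
    simp [Matrix.vecMul, dotProduct, Matrix.transpose_apply]
  rwa [← this]

lemma hamming_bound {k m : ℕ} (hm : 3 ≤ m) (A : Matrix (Fin k) (Fin m) (ZMod 2))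
    (hA : SpanProp k m (m - 2) A) : m + 1 ≤ 2 ^ (m - k) := by
  classical
  set e : Option (Fin m) → (Fin m → ZMod 2) := fun o => o.elim 0 (fun j => Pi.single j 1) with he
  have hwt : ∀ o, (Finset.univ.filter fun j => e o j ≠ 0).card ≤ 1 := by
    rintro (_ | j)
    · simp [he]
    · refine le_trans (Finset.card_le_card ?_) (Finset.card_singleton j).le
      intro t ht
      simp only [Finset.mem_filter, he, Option.elim] at ht
      simp only [Finset.mem_singleton]
      by_contra hne
      exact ht.2 (Pi.single_eq_of_ne hne 1)
  have hinj : Function.Injective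
      (fun p : (Fin k → ZMod 2) × Option (Fin m) => p.1 ᵥ* A + e p.2) := by
    rintro ⟨u₁, o₁⟩ ⟨u₂, o₂⟩ hp
    simp only at hp
    have hcw : (u₁ + u₂) ᵥ* A = e o₁ + e o₂ := by
      ext t
      have h := congrFun hp t
      simp only [Pi.add_apply] at h
      rw [Matrix.add_vecMul]
      simp only [Pi.add_apply]
      have key : ∀ a b c d : ZMod 2, a + b = c + d → a + c = b + d := by decide
      exact key _ _ _ _ h
    by_cases hu : u₁ + u₂ = 0
    · have hu12 : u₁ = u₂ := by
        ext i
        have := congrFun hu i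
        simp only [Pi.add_apply, Pi.zero_apply] at this
        have key : ∀ a b : ZMod 2, a + b = 0 → a = b := by decide
        exact key _ _ this
      subst hu12
      have heo : e o₁ = e o₂ := add_left_cancel hp
      have einj : Function.Injective e := by
        rintro (_ | j₁) (_ | j₂) hee
        · rfl
        · exfalso
          have := congrFun hee j₂
          simp [he] at this
        · exfalso
          have := congrFun hee j₁
          simp [he] at this
        · have := congrFun hee j₁
          simp only [he, Option.elim, Pi.single_apply, if_pos rfl] at this
          by_cases hj : j₁ = j₂
          · rw [hj]
          · simp [hj] at this
      rw [einj heo]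
    · exfalso
      have h3 := wt_ge_three hm A hA (u₁ + u₂) hu
      have hsub : (Finset.univ.filter fun j => ((u₁ + u₂) ᵥ* A) j ≠ 0) ⊆
          (Finset.univ.filter fun j => e o₁ j ≠ 0) ∪
          (Finset.univ.filter fun j => e o₂ j ≠ 0) := by
        intro t ht
        simp only [Finset.mem_filter, Finset.mem_univ, true_and] at ht
        rw [hcw] at ht
        simp only [Pi.add_apply] at ht
        simp only [Finset.mem_union, Finset.mem_filter, Finset.mem_univ, true_and]
        by_contra hc
        push_neg at hc
        rw [hc.1, hc.2] at ht
        exact ht (by simp)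
      have h4 := Finset.card_le_card hsub
      have h5 := Finset.card_union_le (Finset.univ.filter fun j => e o₁ j ≠ 0)
        (Finset.univ.filter fun j => e o₂ j ≠ 0)
      have h6 := hwt o₁
      have h7 := hwt o₂
      omega
  -- counting
  have hcard := Fintype.card_le_of_injective _ hinj
  simp only [Fintype.card_prod, Fintype.card_fun, Fintype.card_option,
    ZMod.card, Fintype.card_fin] at hcard
  -- hcard : 2 ^ k * (m + 1) ≤ 2 ^ m
  have hkm : k ≤ m := by
    by_contra hk
    push_neg at hk
    have h1 : 2 ^ m < 2 ^ k := Nat.pow_lt_pow_right one_lt_two hk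
    nlinarith [Nat.one_le_two_pow (n := k)]
  have : 2 ^ k * (m + 1) ≤ 2 ^ k * 2 ^ (m - k) := by
    calc 2 ^ k * (m + 1) ≤ 2 ^ m := hcard
    _ = 2 ^ k * 2 ^ (m - k) := by rw [← pow_add]; congr 1; omega
  exact Nat.le_of_mul_le_mul_left this (Nat.two_pow_pos k)

lemma construction {m k r : ℕ} (hm : 3 ≤ m) (hkr : k + r = m) (hpow : m + 1 ≤ 2 ^ r) :
    ∃ A : Matrix (Fin k) (Fin m) (ZMod 2), SpanProp k m (m - 2) A := by
  classical
  set g : Option (Fin r) → (Fin r → ZMod 2) := fun o => o.elim 0 (fun t => Pi.single t 1)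
    with hg
  have ginj : Function.Injective g := by
    rintro (_ | t₁) (_ | t₂) hee
    · rfl
    · exfalso; have := congrFun hee t₂; simp [hg] at this
    · exfalso; have := congrFun hee t₁; simp [hg] at this
    · have := congrFun hee t₁
      simp only [hg, Option.elim, Pi.single_apply, if_pos rfl] at this
      by_cases hj : t₁ = t₂
      · rw [hj]
      · simp [hj] at this
  set B := (Finset.univ.image g)ᶜ with hB
  have hBcard : B.card = 2 ^ r - (r + 1) := by
    rw [hB, Finset.card_compl, Finset.card_image_of_injective _ ginj]
    simp
  have hkB : k ≤ B.card := by rw [hBcard]; omega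
  obtain ⟨emb⟩ := Function.Embedding.nonempty_of_card_le (α := Fin k) (β := {x // x ∈ B})
    (by rwa [Fintype.card_coe, Fintype.card_fin])
  set e : Fin k → (Fin r → ZMod 2) := fun i => (emb i).1 with hev
  have einj : Function.Injective e := fun i1 i2 h => emb.injective (Subtype.ext h)
  have heB : ∀ i, e i ∉ Finset.univ.image g := by
    intro i
    exact Finset.mem_compl.mp ((emb i).2)
  have he0 : ∀ i, e i ≠ 0 := by
    intro i h
    exact heB i (Finset.mem_image.mpr ⟨none, Finset.mem_univ _, h.symm⟩)
  have hes : ∀ i t, e i ≠ Pi.single t 1 := by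
    intro i t h
    exact heB i (Finset.mem_image.mpr ⟨some t, Finset.mem_univ _, h.symm⟩)
  have hval : ∀ x : ZMod 2, x ≠ 0 → x = 1 := by decide
  set A : Matrix (Fin k) (Fin m) (ZMod 2) := fun i j =>
    if h : (j : ℕ) < k then (if (i : ℕ) = (j : ℕ) then 1 else 0)
    else e i ⟨(j : ℕ) - k, by omega⟩ with hA
  set ι1 : Fin k → Fin m := fun i => ⟨i, by omega⟩ with hι1
  set ι2 : Fin r → Fin m := fun t => ⟨k + t, by omega⟩ with hι2
  have ι1inj : Function.Injective ι1 := by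
    intro a b h
    have : (a : ℕ) = (b : ℕ) := by simpa [hι1, Fin.ext_iff] using h
    exact Fin.ext this
  have hdot1 : ∀ (u : Fin k → ZMod 2) (i' : Fin k),
      dotProduct u (Aᵀ (ι1 i')) = u i' := by
    intro u i'
    simp only [dotProduct, Matrix.transpose_apply]; simp only [hA, hι1]
    rw [Finset.sum_eq_single i']
    · rw [dif_pos i'.isLt, if_pos rfl, mul_one]
    · intro b _ hb
      rw [dif_pos i'.isLt, if_neg (fun h => hb (Fin.ext h)), mul_zero]
    · intro h; exact absurd (Finset.mem_univ i') h
  have hdot2 : ∀ (u : Fin k → ZMod 2) (t : Fin r),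
      dotProduct u (Aᵀ (ι2 t)) = ∑ i, u i * e i t := by
    intro u t
    simp only [dotProduct, Matrix.transpose_apply]
    refine Finset.sum_congr rfl fun i _ => ?_
    congr 1
    show A i (ι2 t) = e i t
    simp only [hA, hι2]
    rw [dif_neg (by omega)]
    congr 1
    exact Fin.ext (by simp)
  -- main weight lemma
  have hwt : ∀ u : Fin k → ZMod 2, u ≠ 0 →
      3 ≤ (Finset.univ.filter fun j => dotProduct u (Aᵀ j) ≠ 0).card := by
    intro u hu
    set N := Finset.univ.filter fun j => dotProduct u (Aᵀ j) ≠ 0 with hN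
    have card3 : ∀ j1 j2 j3 : Fin m, j1 ≠ j2 → j1 ≠ j3 → j2 ≠ j3 →
        j1 ∈ N → j2 ∈ N → j3 ∈ N → 3 ≤ N.card := by
      intro j1 j2 j3 h12 h13 h23 m1 m2 m3
      have hsub : ({j1, j2, j3} : Finset (Fin m)) ⊆ N := by
        intro x hx
        simp only [Finset.mem_insert, Finset.mem_singleton] at hx
        rcases hx with rfl | rfl | rfl <;> assumption
      have hcard : ({j1, j2, j3} : Finset (Fin m)).card = 3 := by
        rw [Finset.card_insert_of_notMem (by simp [h12, h13]),
          Finset.card_insert_of_notMem (by simp [h23]), Finset.card_singleton]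
      rw [← hcard]
      exact Finset.card_le_card hsub
    set su := Finset.univ.filter fun i => u i ≠ 0 with hsu
    have hsu_ne : su.Nonempty := by
      rcases Function.ne_iff.mp hu with ⟨i, hi⟩
      exact ⟨i, by simp only [hsu, Finset.mem_filter, Finset.mem_univ, true_and]; simpa using hi⟩
    have hmemsu : ∀ i, i ∈ su ↔ u i ≠ 0 := by
      intro i; simp [hsu]
    by_cases h3 : 3 ≤ su.card
    · have hsubN : su.image ι1 ⊆ N := by
        intro j hj
        obtain ⟨i, hi, rfl⟩ := Finset.mem_image.mp hj
        simp only [hN, Finset.mem_filter, Finset.mem_univ, true_and]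
        rw [hdot1]
        exact (hmemsu i).mp hi
      have := Finset.card_le_card hsubN
      rw [Finset.card_image_of_injective _ ι1inj] at this
      omega
    · have hc12 : su.card = 1 ∨ su.card = 2 := by
        have := Finset.card_pos.mpr hsu_ne
        omega
      have hne12 : ∀ (i : Fin k) (t : Fin r), ι1 i ≠ ι2 t := by
        intro i t h
        have : (i : ℕ) = k + t := by simpa [hι1, hι2, Fin.ext_iff] using h
        omega
      rcases hc12 with h1 | h2
      · obtain ⟨i, hsi⟩ := Finset.card_eq_one.mp h1
        have hii : u i ≠ 0 := (hmemsu i).mp (hsi ▸ Finset.mem_singleton_self i)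
        have hui : u i = 1 := hval _ hii
        have huo : ∀ i', i' ≠ i → u i' = 0 := by
          intro i' hne
          by_contra h
          have := (hmemsu i').mpr h
          rw [hsi, Finset.mem_singleton] at this
          exact hne this
        have hd2 : ∀ t, dotProduct u (Aᵀ (ι2 t)) = e i t := by
          intro t
          rw [hdot2, Finset.sum_eq_single i]
          · rw [hui, one_mul]
          · intro b _ hb; rw [huo b hb, zero_mul]
          · intro h; exact absurd (Finset.mem_univ i) h
        set se := Finset.univ.filter fun t => e i t ≠ 0 with hse
        have hmemse : ∀ t, t ∈ se ↔ e i t ≠ 0 := by intro t; simp [hse]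
        have hse1 : se.Nonempty := by
          rcases Function.ne_iff.mp (he0 i) with ⟨t, ht⟩
          exact ⟨t, (hmemse t).mpr (by simpa using ht)⟩
        have hse2 : 2 ≤ se.card := by
          by_contra hle
          push_neg at hle
          have hc1 : se.card = 1 := by
            have := Finset.card_pos.mpr hse1
            omega
          obtain ⟨t, ht⟩ := Finset.card_eq_one.mp hc1
          apply hes i t
          ext t'
          by_cases htt : t' = t
          · subst htt
            rw [Pi.single_eq_same]
            exact hval _ ((hmemse t').mp (ht ▸ Finset.mem_singleton_self t'))
          · rw [Pi.single_eq_of_ne htt]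
            by_contra h
            have := (hmemse t').mpr h
            rw [ht, Finset.mem_singleton] at this
            exact htt this
        obtain ⟨t1, ht1, t2, ht2, ht12⟩ := Finset.one_lt_card.mp hse2
        refine card3 (ι1 i) (ι2 t1) (ι2 t2) (hne12 i t1) (hne12 i t2) ?_ ?_ ?_ ?_
        · intro h
          have : k + (t1 : ℕ) = k + (t2 : ℕ) := by simpa [hι2, Fin.ext_iff] using h
          exact ht12 (Fin.ext (by omega))
        · simp only [hN, Finset.mem_filter, Finset.mem_univ, true_and]
          rw [hdot1]; exact hii
        · simp only [hN, Finset.mem_filter, Finset.mem_univ, true_and]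
          rw [hd2]; exact (hmemse t1).mp ht1
        · simp only [hN, Finset.mem_filter, Finset.mem_univ, true_and]
          rw [hd2]; exact (hmemse t2).mp ht2
      · obtain ⟨i1, i2, hne, hsi⟩ := Finset.card_eq_two.mp h2
        have hii1 : u i1 ≠ 0 := (hmemsu i1).mp (by rw [hsi]; simp)
        have hii2 : u i2 ≠ 0 := (hmemsu i2).mp (by rw [hsi]; simp)
        have hui1 : u i1 = 1 := hval _ hii1
        have hui2 : u i2 = 1 := hval _ hii2
        have huo : ∀ i', i' ≠ i1 → i' ≠ i2 → u i' = 0 := by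
          intro i' h1 h2
          by_contra h
          have := (hmemsu i').mpr h
          rw [hsi] at this
          simp only [Finset.mem_insert, Finset.mem_singleton] at this
          tauto
        have hd2 : ∀ t, dotProduct u (Aᵀ (ι2 t)) = e i1 t + e i2 t := by
          intro t
          rw [hdot2,
            ← Finset.sum_subset (Finset.subset_univ ({i1, i2} : Finset (Fin k)))
              (fun x _ hx => by
                simp only [Finset.mem_insert, Finset.mem_singleton] at hx
                push_neg at hx
                rw [huo x hx.1 hx.2, zero_mul]),
            Finset.sum_pair hne, hui1, hui2, one_mul, one_mul]
        have hee : e i1 ≠ e i2 := fun h => hne (einj h)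
        obtain ⟨t, ht⟩ := Function.ne_iff.mp hee
        have hsum : e i1 t + e i2 t ≠ 0 := by
          have : ∀ a b : ZMod 2, a ≠ b → a + b ≠ 0 := by decide
          exact this _ _ ht
        refine card3 (ι1 i1) (ι1 i2) (ι2 t) (fun h => hne (ι1inj h))
          (hne12 i1 t) (hne12 i2 t) ?_ ?_ ?_
        · simp only [hN, Finset.mem_filter, Finset.mem_univ, true_and]
          rw [hdot1]; exact hii1
        · simp only [hN, Finset.mem_filter, Finset.mem_univ, true_and]
          rw [hdot1]; exact hii2
        · simp only [hN, Finset.mem_filter, Finset.mem_univ, true_and]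
          rw [hd2]; exact hsum
  -- conclude SpanProp
  refine ⟨A, ?_⟩
  intro S hS
  apply span_eq_top_of_dot
  intro u hu
  by_contra hc
  push_neg at hc
  have h3 := hwt u hu
  have hsub : (Finset.univ.filter fun j => dotProduct u (Aᵀ j) ≠ 0) ⊆ Sᶜ := by
    intro j hj
    rw [Finset.mem_compl]
    intro hjS
    exact (Finset.mem_filter.mp hj).2 (hc (Aᵀ j) ⟨j, hjS, rfl⟩)
  have hle := Finset.card_le_card hsub
  rw [Finset.card_compl, hS, Fintype.card_fin] at hle
  omega

theorem s_m_sub_two (m : ℕ) (hm : 3 ≤ m) :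
    (s m (m - 2) : ℤ) = ⌊(m : ℝ) - Real.logb 2 (m + 1)⌋ ∧
    IsGreatest {k : ℕ | m + 1 ≤ 2 ^ (m - k) ∧ k ≤ m} (s m (m - 2)) := by
  set r0 := Nat.clog 2 (m + 1) with hr0
  set k0 := m - r0 with hk0
  have h1r : 1 < r0 := (Nat.lt_clog_iff_pow_lt one_lt_two).mpr (by omega)
  have hrm : r0 ≤ m := (Nat.clog_le_iff_le_pow one_lt_two).mpr
    (by have := Nat.lt_two_pow_self (n := m); omega)
  have hpow : m + 1 ≤ 2 ^ r0 := Nat.le_pow_clog one_lt_two _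
  have hlow : 2 ^ (r0 - 1) < m + 1 := Nat.pow_pred_clog_lt_self one_lt_two (by omega)
  obtain ⟨A, hA⟩ := construction hm (show k0 + r0 = m by omega) hpow
  have hmem : k0 ∈ {k : ℕ | ∃ A : Matrix (Fin k) (Fin m) (ZMod 2), SpanProp k m (m - 2) A} :=
    ⟨A, hA⟩
  have hub : ∀ K ∈ {k : ℕ | ∃ A : Matrix (Fin k) (Fin m) (ZMod 2), SpanProp k m (m - 2) A},
      K ≤ k0 := by
    rintro K ⟨A', hA'⟩
    have hham := hamming_bound hm A' hA'
    have : r0 ≤ m - K := (Nat.clog_le_iff_le_pow one_lt_two).mpr hham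
    omega
  have hs : s m (m - 2) = k0 := by
    rw [s]
    exact le_antisymm (csSup_le ⟨k0, hmem⟩ hub) (le_csSup ⟨k0, hub⟩ hmem)
  rw [hs]
  constructor
  · symm
    rw [Int.floor_eq_iff]
    have hcast : ((k0 : ℤ) : ℝ) = (m : ℝ) - (r0 : ℝ) := by
      push_cast [hk0, Nat.cast_sub hrm]
      ring
    constructor
    · rw [hcast]
      have : Real.logb 2 ((m : ℝ) + 1) ≤ (r0 : ℝ) := by
        rw [Real.logb_le_iff_le_rpow one_lt_two (by positivity)]
        rw [Real.rpow_natCast]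
        exact_mod_cast hpow
      linarith
    · rw [hcast]
      have : ((r0 : ℝ) - 1) < Real.logb 2 ((m : ℝ) + 1) := by
        rw [Real.lt_logb_iff_rpow_lt one_lt_two (by positivity)]
        have h1 : ((r0 : ℝ) - 1) = ((r0 - 1 : ℕ) : ℝ) := by
          push_cast [Nat.cast_sub (by omega : 1 ≤ r0)]
          ring
        rw [h1, Real.rpow_natCast]
        exact_mod_cast hlow
      linarith
  · constructor
    · constructor
      · have : m - k0 = r0 := by omega
        rw [this]
        exact hpow
      · omega
    · rintro K ⟨hK1, hK2⟩
      have : r0 ≤ m - K := (Nat.clog_le_iff_le_pow one_lt_two).mpr hK1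
      omega
end

section
/- Let k ≥ 2 and b a real number. If real numbers a_v ≥ 0 indexed by the nonzero v in (Z/2)^k satisfy Σ_{(u,v)=0} a_v ≤ b for every nonzero u in (Z/2)^k, then Σ_v a_v ≤ (2^k − 1)b/(2^{k−1} − 1), with equality if and only if a_v = b/(2^{k−1} − 1) for all v. -/
open Matrix Finset

private lemma zmod2_em (x : ZMod 2) : x = 0 ∨ x = 1 := by revert x; decide

private lemma exists_one {k : ℕ} (v : Fin k → ZMod 2) (hv : v ≠ 0) : ∃ i, v i = 1 := by
  by_contra h; push_neg at h
  exact hv (funext fun i => (zmod2_em (v i)).resolve_right (h i))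

private lemma exists_witness {k : ℕ} (v0 v : Fin k → ZMod 2) (hv : v ≠ 0) (hne : v ≠ v0) :
    ∃ w : Fin k → ZMod 2, w ⬝ᵥ v0 = 0 ∧ w ⬝ᵥ v = 1 := by
  by_contra h
  push_neg at h
  have H : ∀ w : Fin k → ZMod 2, w ⬝ᵥ v0 = 0 → w ⬝ᵥ v = 0 := fun w hw =>
    (zmod2_em _).resolve_right (h w hw)
  have h0 : ∀ j, v0 j = 0 → v j = 0 := by
    intro j hj
    have := H (Pi.single j 1) (by rw [single_dotProduct, hj, mul_zero])
    rwa [single_dotProduct, one_mul] at this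
  by_cases hv0 : v0 = 0
  · exact hv (funext fun j => by rw [h0 j (by rw [hv0]; rfl)]; rfl)
  · obtain ⟨j0, hj0⟩ := exists_one v0 hv0
    have key : ∀ x y : ZMod 2, x + y = 0 → x = y := by decide
    have h1 : ∀ j, v0 j = 1 → v j = v j0 := by
      intro j hj
      rcases eq_or_ne j j0 with rfl | hjj
      · rfl
      · have hw : (Pi.single j 1 + Pi.single j0 1 : Fin k → ZMod 2) ⬝ᵥ v0 = 0 := by
          rw [add_dotProduct, single_dotProduct, single_dotProduct,
            one_mul, one_mul, hj, hj0]; decide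
        have := H _ hw
        rw [add_dotProduct, single_dotProduct, single_dotProduct,
          one_mul, one_mul] at this
        exact key _ _ this
    rcases zmod2_em (v j0) with hvj0 | hvj0
    · refine hv (funext fun j => ?_)
      rcases zmod2_em (v0 j) with h' | h'
      · rw [h0 j h']; rfl
      · rw [h1 j h', hvj0]; rfl
    · refine hne (funext fun j => ?_)
      rcases zmod2_em (v0 j) with h' | h'
      · rw [h0 j h', h']
      · rw [h1 j h', hvj0, h']

private lemma card_filter_shift {k : ℕ} (w : Fin k → ZMod 2) (p q : (Fin k → ZMod 2) → Prop)
    [DecidablePred p] [DecidablePred q] (hpq : ∀ u, p u ↔ q (u + w)) :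
    (univ.filter p).card = (univ.filter q).card := by
  have hww : ∀ u : Fin k → ZMod 2, u + w + w = u := by
    intro u; funext i
    simp only [Pi.add_apply]
    rw [add_assoc, CharTwo.add_self_eq_zero, add_zero]
  apply Finset.card_bij (fun u _ => u + w)
  · intro u hu
    simp only [mem_filter, mem_univ, true_and] at *
    exact (hpq u).1 hu
  · intro u _ u' _ h; exact add_right_cancel h
  · intro u hu
    simp only [mem_filter, mem_univ, true_and] at *
    exact ⟨u + w, by rw [hpq (u + w), hww]; exact hu, hww u⟩

private lemma card_dot {k : ℕ} (hk : 1 ≤ k) (v : Fin k → ZMod 2) (hv : v ≠ 0) :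
    (univ.filter fun u : Fin k → ZMod 2 => u ⬝ᵥ v = 0).card = 2 ^ (k - 1) ∧
    (univ.filter fun u : Fin k → ZMod 2 => u ⬝ᵥ v = 1).card = 2 ^ (k - 1) := by
  obtain ⟨i, hi⟩ := exists_one v hv
  have zfact : ∀ x : ZMod 2, x = 0 ↔ x + 1 = 1 := by decide
  have hshift : (univ.filter fun u : Fin k → ZMod 2 => u ⬝ᵥ v = 0).card
      = (univ.filter fun u : Fin k → ZMod 2 => u ⬝ᵥ v = 1).card := by
    apply card_filter_shift (Pi.single i 1)
    intro u
    rw [add_dotProduct, single_dotProduct, hi, one_mul]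
    exact zfact _
  have hcompl : (univ.filter fun u : Fin k → ZMod 2 => u ⬝ᵥ v = 0).card
      + (univ.filter fun u : Fin k → ZMod 2 => u ⬝ᵥ v = 1).card
      = 2 ^ k := by
    have zfact2 : ∀ x : ZMod 2, ¬ x = 0 ↔ x = 1 := by decide
    rw [show (univ.filter fun u : Fin k → ZMod 2 => u ⬝ᵥ v = 1)
        = univ.filter fun u : Fin k → ZMod 2 => ¬ u ⬝ᵥ v = 0 from
        Finset.filter_congr fun u _ => by rw [zfact2]]
    rw [Finset.card_filter_add_card_filter_not, card_univ]
    simp [ZMod.card]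
  have hpow : 2 ^ k = 2 ^ (k - 1) * 2 := by
    rw [← pow_succ]; congr 1; omega
  constructor <;> omega

private lemma card_pair_fiber {k : ℕ} (v0 v : Fin k → ZMod 2) (hk : 2 ≤ k)
    (hv0 : v0 ≠ 0) (hv : v ≠ 0) (hne : v ≠ v0) :
    (univ.filter fun u : Fin k → ZMod 2 => u ⬝ᵥ v0 = 1 ∧ u ⬝ᵥ v = 0).card = 2 ^ (k - 2) := by
  obtain ⟨w01, hw01a, hw01b⟩ := exists_witness v0 v hv hne
  obtain ⟨w10, hw10a, hw10b⟩ := exists_witness v v0 hv0 (Ne.symm hne)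
  have zfact : ∀ x c : ZMod 2, x = 0 ↔ x + c = c := by decide
  have hfib : ∀ c d : ZMod 2,
      (univ.filter fun u : Fin k → ZMod 2 => u ⬝ᵥ v0 = 0 ∧ u ⬝ᵥ v = 0).card
      = (univ.filter fun u : Fin k → ZMod 2 => u ⬝ᵥ v0 = c ∧ u ⬝ᵥ v = d).card := by
    intro c d
    apply card_filter_shift (c • w10 + d • w01)
    intro u
    have e0 : (c • w10 + d • w01) ⬝ᵥ v0 = c := by
      rw [add_dotProduct, smul_dotProduct, smul_dotProduct,
        hw10b, hw01a]
      simp [smul_eq_mul]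
    have e1 : (c • w10 + d • w01) ⬝ᵥ v = d := by
      rw [add_dotProduct, smul_dotProduct, smul_dotProduct,
        hw10a, hw01b]
      simp [smul_eq_mul]
    rw [add_dotProduct, e0, add_dotProduct, e1]
    rw [zfact (u ⬝ᵥ v0) c, zfact (u ⬝ᵥ v) d]
  have htotal : (2 : ℕ) ^ k = ∑ b : ZMod 2 × ZMod 2,
      (univ.filter fun u : Fin k → ZMod 2 => (u ⬝ᵥ v0, u ⬝ᵥ v) = b).card := by
    rw [← Finset.card_eq_sum_card_fiberwise (f := fun u : Fin k → ZMod 2 => (u ⬝ᵥ v0, u ⬝ᵥ v))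
      (t := univ) (fun x _ => mem_univ _), card_univ]
    simp [ZMod.card]
  have hconv : ∀ b : ZMod 2 × ZMod 2,
      (univ.filter fun u : Fin k → ZMod 2 => (u ⬝ᵥ v0, u ⬝ᵥ v) = b)
      = (univ.filter fun u : Fin k → ZMod 2 => u ⬝ᵥ v0 = b.1 ∧ u ⬝ᵥ v = b.2) := by
    intro b; apply Finset.filter_congr; intro u _; rw [Prod.ext_iff]
  simp_rw [hconv] at htotal
  rw [show (Finset.univ : Finset (ZMod 2 × ZMod 2)) = {(0,0),(0,1),(1,0),(1,1)} by decide] at htotal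
  rw [Finset.sum_insert (by decide), Finset.sum_insert (by decide),
    Finset.sum_insert (by decide), Finset.sum_singleton] at htotal
  have h01 := hfib 0 1
  have h10 := hfib 1 0
  have h11 := hfib 1 1
  have hpow : (2:ℕ) ^ k = 4 * 2 ^ (k - 2) := by
    conv_lhs => rw [show k = 2 + (k - 2) by omega]
    rw [pow_add]; norm_num
  simp only [Prod.fst, Prod.snd] at htotal
  omega

theorem real_lp_bound (k : ℕ) (hk : 2 ≤ k) (b : ℝ) (a : (Fin k → ZMod 2) → ℝ)
    (ha : ∀ v : Fin k → ZMod 2, v ≠ 0 → 0 ≤ a v)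
    (hb : ∀ u : Fin k → ZMod 2, u ≠ 0 →
      ∑ v ∈ Finset.univ.filter
        (fun v : Fin k → ZMod 2 => v ≠ 0 ∧ dotProduct u v = 0), a v ≤ b) :
    (∑ v ∈ Finset.univ.filter (fun v : Fin k → ZMod 2 => v ≠ 0), a v ≤
      (2 ^ k - 1) * b / (2 ^ (k - 1) - 1)) ∧
    ((∑ v ∈ Finset.univ.filter (fun v : Fin k → ZMod 2 => v ≠ 0), a v =
      (2 ^ k - 1) * b / (2 ^ (k - 1) - 1)) ↔
      ∀ v : Fin k → ZMod 2, v ≠ 0 → a v = b / (2 ^ (k - 1) - 1)) := by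
  classical
  set q : ℝ := (2 : ℝ) ^ (k - 2) with hqdef
  have hq1 : (1 : ℝ) ≤ q := one_le_pow₀ one_le_two
  have hq0 : (0 : ℝ) < q := by linarith
  have ek1 : (2 : ℝ) ^ (k - 1) = 2 * q := by
    rw [hqdef, ← pow_succ']
    congr 1; omega
  have ek : (2 : ℝ) ^ k = 4 * q := by
    rw [hqdef]
    conv_lhs => rw [show k = 2 + (k - 2) by omega]
    rw [pow_add]; norm_num
  have h2q1 : (0 : ℝ) < 2 * q - 1 := by linarith
  set V : Finset (Fin k → ZMod 2) := Finset.univ.filter (fun v : Fin k → ZMod 2 => v ≠ 0)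
    with hVdef
  set S : ℝ := ∑ v ∈ V, a v with hSdef
  -- cast facts
  have en1 : (((2 : ℕ) ^ (k - 1) - 1 : ℕ) : ℝ) = 2 * q - 1 := by
    rw [Nat.cast_sub Nat.one_le_two_pow]; push_cast; rw [ek1]
  have en0 : (((2 : ℕ) ^ (k - 1) : ℕ) : ℝ) = 2 * q := by push_cast; rw [ek1]
  have en2 : (((2 : ℕ) ^ (k - 2) : ℕ) : ℝ) = q := by push_cast; rw [hqdef]
  have enk : (((2 : ℕ) ^ k - 1 : ℕ) : ℝ) = 4 * q - 1 := by
    rw [Nat.cast_sub Nat.one_le_two_pow]; push_cast; rw [ek]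
  -- card of V
  have hVcard : V.card = 2 ^ k - 1 := by
    rw [hVdef, Finset.filter_ne', Finset.card_erase_of_mem (mem_univ _), card_univ]
    congr 1
    simp [ZMod.card]
  -- double counting
  have hswap : ∀ U : Finset (Fin k → ZMod 2),
      ∑ u ∈ U, ∑ v ∈ Finset.univ.filter
          (fun v : Fin k → ZMod 2 => v ≠ 0 ∧ dotProduct u v = 0), a v
      = ∑ v ∈ V, ((U.filter fun u => u ⬝ᵥ v = 0).card : ℝ) * a v := by
    intro U
    have h1 : ∀ u : Fin k → ZMod 2,
        ∑ v ∈ Finset.univ.filter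
          (fun v : Fin k → ZMod 2 => v ≠ 0 ∧ dotProduct u v = 0), a v
        = ∑ v ∈ V, if u ⬝ᵥ v = 0 then a v else 0 := by
      intro u
      rw [← Finset.sum_filter, hVdef, Finset.filter_filter]
    simp_rw [h1]
    rw [Finset.sum_comm]
    refine Finset.sum_congr rfl fun v hv => ?_
    rw [← Finset.sum_filter, Finset.sum_const, nsmul_eq_mul]
  -- count of nonzero u orthogonal to v
  have hUcount : ∀ v ∈ V, (V.filter fun u => u ⬝ᵥ v = 0).card = 2 ^ (k - 1) - 1 := by
    intro v hv
    have hvne : v ≠ 0 := (Finset.mem_filter.1 hv).2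
    have heq : V.filter (fun u => u ⬝ᵥ v = 0)
        = (Finset.univ.filter fun u : Fin k → ZMod 2 => u ⬝ᵥ v = 0).erase 0 := by
      rw [hVdef, ← Finset.filter_ne']
      ext u
      simp only [Finset.mem_filter, Finset.mem_univ, true_and]
      tauto
    rw [heq, Finset.card_erase_of_mem
      (by simp [zero_dotProduct]),
      (card_dot (by omega) v hvne).1]
  -- the main double count over V
  have hdouble : ∑ u ∈ V, ∑ v ∈ Finset.univ.filter
        (fun v : Fin k → ZMod 2 => v ≠ 0 ∧ dotProduct u v = 0), a v
      = (2 * q - 1) * S := by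
    rw [hswap V]
    rw [Finset.sum_congr rfl fun v hv => by rw [hUcount v hv]]
    rw [← Finset.mul_sum, en1, ← hSdef]
  -- row sum bound
  have hrowle : ∀ u ∈ V, ∑ v ∈ Finset.univ.filter
      (fun v : Fin k → ZMod 2 => v ≠ 0 ∧ dotProduct u v = 0), a v ≤ b :=
    fun u hu => hb u (Finset.mem_filter.1 hu).2
  have hsum_b : ∑ _u ∈ V, b = (4 * q - 1) * b := by
    rw [Finset.sum_const, nsmul_eq_mul, hVcard, enk]
  have hkey : (2 * q - 1) * S ≤ (4 * q - 1) * b := by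
    rw [← hdouble, ← hsum_b]
    exact Finset.sum_le_sum hrowle
  have hgoal1 : S ≤ (2 ^ k - 1) * b / (2 ^ (k - 1) - 1) := by
    rw [ek, ek1, le_div_iff₀ (by linarith)]
    linarith
  refine ⟨hgoal1, ?_, ?_⟩
  · -- equality implies all equal
    intro heq v0 hv0
    have hv0V : v0 ∈ V := Finset.mem_filter.2 ⟨mem_univ _, hv0⟩
    -- all row sums equal b
    have hStot : ∑ u ∈ V, ∑ v ∈ Finset.univ.filter
        (fun v : Fin k → ZMod 2 => v ≠ 0 ∧ dotProduct u v = 0), a v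
        = ∑ _u ∈ V, b := by
      rw [hdouble, hsum_b, heq, ek, ek1]
      field_simp
    have hrows := (Finset.sum_eq_sum_iff_of_le hrowle).1 hStot
    -- sum over u with u ⬝ᵥ v0 = 1
    set W : Finset (Fin k → ZMod 2) := Finset.univ.filter (fun u => u ⬝ᵥ v0 = 1) with hWdef
    have hWsub : ∀ u ∈ W, u ∈ V := by
      intro u hu
      rw [hWdef, Finset.mem_filter] at hu
      refine Finset.mem_filter.2 ⟨mem_univ _, fun h => ?_⟩
      rw [h, zero_dotProduct] at hu
      exact one_ne_zero hu.2.symm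
    have hWcard : W.card = 2 ^ (k - 1) := (card_dot (by omega) v0 hv0).2
    have hT1 : ∑ u ∈ W, ∑ v ∈ Finset.univ.filter
        (fun v : Fin k → ZMod 2 => v ≠ 0 ∧ dotProduct u v = 0), a v
        = 2 * q * b := by
      rw [Finset.sum_congr rfl fun u hu => hrows u (hWsub u hu), Finset.sum_const,
        nsmul_eq_mul, hWcard, en0]
    have hT2 : ∑ u ∈ W, ∑ v ∈ Finset.univ.filter
        (fun v : Fin k → ZMod 2 => v ≠ 0 ∧ dotProduct u v = 0), a v
        = q * (S - a v0) := by
      rw [hswap W]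
      have hcount : ∀ v ∈ V.erase v0,
          ((W.filter fun u => u ⬝ᵥ v = 0).card : ℝ) = q := by
        intro v hv
        have h1 : v ≠ v0 := (Finset.mem_erase.1 hv).1
        have h2 : v ≠ 0 := (Finset.mem_filter.1 (Finset.mem_erase.1 hv).2).2
        rw [hWdef, Finset.filter_filter]
        rw [card_pair_fiber v0 v hk hv0 h2 h1, en2]
      have hv0count : ((W.filter fun u => u ⬝ᵥ v0 = 0).card : ℝ) = 0 := by
        rw [hWdef, Finset.filter_filter]
        norm_cast
        rw [Finset.card_eq_zero, Finset.filter_eq_empty_iff]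
        intro u _
        rintro ⟨h1, h2⟩
        rw [h2] at h1
        exact one_ne_zero h1.symm
      rw [← Finset.add_sum_erase _ _ hv0V, hv0count, zero_mul, zero_add]
      rw [Finset.sum_congr rfl fun v hv => by rw [hcount v hv]]
      rw [← Finset.mul_sum]
      congr 1
      have := Finset.add_sum_erase V a hv0V
      rw [← hSdef] at this
      linarith
    have hfin : q * (S - a v0) = 2 * q * b := by rw [← hT2, hT1]
    have hSa : S - a v0 = 2 * b := by
      have := mul_left_cancel₀ (ne_of_gt hq0) (by linarith [hfin] : q * (S - a v0) = q * (2 * b))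
      exact this
    -- now solve
    rw [ek, ek1] at heq
    rw [ek1, eq_div_iff (by linarith : (2 : ℝ) * q - 1 ≠ 0)]
    rw [eq_div_iff (by linarith : (2 : ℝ) * q - 1 ≠ 0)] at heq
    nlinarith [heq, hSa]
  · -- all equal implies equality
    intro hc
    rw [hSdef, Finset.sum_congr rfl fun v hv => hc v (Finset.mem_filter.1 hv).2,
      Finset.sum_const, nsmul_eq_mul, hVcard, enk, ek, ek1, mul_div_assoc]
end

section
/- For k ≥ 2 and any non-negative integer Q, m_k((2^{k−1} − 1)Q) = (2^k − 1)Q; in particular m_2(b) = 3b for every b ≥ 0. -/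
open Matrix Finset

lemma card_ker {k : ℕ} (u : Fin k → ZMod 2) (hu : u ≠ 0) :
    (Finset.univ.filter (fun v : Fin k → ZMod 2 => dotProduct u v = 0)).card
      = 2 ^ (k - 1) := by
  obtain ⟨i, hi⟩ : ∃ i, u i ≠ 0 := by
    by_contra h; push_neg at h; exact hu (funext h)
  have hone : ∀ x : ZMod 2, x ≠ 0 → x = 1 := by decide
  have hui : u i = 1 := hone _ hi
  have hdot : ∀ v : Fin k → ZMod 2,
      dotProduct u (v + Pi.single i 1) = dotProduct u v + 1 := by
    intro v
    rw [dotProduct_add]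
    congr 1
    simp [dotProduct, Pi.single_apply, hui]
  have hinv : ∀ v : Fin k → ZMod 2, v + Pi.single i 1 + Pi.single i 1 = v := by
    intro v
    funext j
    by_cases hj : j = i <;> simp [Pi.single_apply, hj]
    subst hj
    show v j + 1 + 1 = v j
    have h11 : (1 : ZMod 2) + 1 = 0 := by decide
    rw [add_assoc, h11, add_zero]
  have hAB : (Finset.univ.filter (fun v : Fin k → ZMod 2 => dotProduct u v = 0)).card
      = (Finset.univ.filter (fun v : Fin k → ZMod 2 => ¬ dotProduct u v = 0)).card := by
    refine Finset.card_bij' (fun v _ => v + Pi.single i 1) (fun v _ => v + Pi.single i 1)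
      ?_ ?_ ?_ ?_
    · intro v hv
      simp only [Finset.mem_filter, Finset.mem_univ, true_and] at hv ⊢
      rw [hdot, hv]
      decide
    · intro v hv
      simp only [Finset.mem_filter, Finset.mem_univ, true_and] at hv ⊢
      rw [hdot, hone _ hv]
      decide
    · intro v _; exact hinv v
    · intro v _; exact hinv v
  have hsum : (Finset.univ.filter (fun v : Fin k → ZMod 2 => dotProduct u v = 0)).card
      + (Finset.univ.filter (fun v : Fin k → ZMod 2 => ¬ dotProduct u v = 0)).card
      = 2 ^ k := by
    rw [Finset.card_filter_add_card_filter_not, Finset.card_univ]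
    simp [Fintype.card_fun]
  have hk1 : 1 ≤ k := i.pos
  have h2 : 2 ^ k = 2 * 2 ^ (k - 1) := by
    rw [← pow_succ']
    congr 1
    omega
  omega

lemma card_ker' {k : ℕ} (u : Fin k → ZMod 2) (hu : u ≠ 0) :
    (Finset.univ.filter (fun v : Fin k → ZMod 2 => v ≠ 0 ∧ dotProduct u v = 0)).card
      = 2 ^ (k - 1) - 1 := by
  have h0 : (0 : Fin k → ZMod 2)
      ∈ Finset.univ.filter (fun v : Fin k → ZMod 2 => dotProduct u v = 0) := by
    simp
  have heq : Finset.univ.filter (fun v : Fin k → ZMod 2 => v ≠ 0 ∧ dotProduct u v = 0)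
      = (Finset.univ.filter (fun v : Fin k → ZMod 2 => dotProduct u v = 0)).erase 0 := by
    ext v
    simp [Finset.mem_erase, and_comm]
  rw [heq, Finset.card_erase_of_mem h0, card_ker u hu]

lemma card_nonzero (k : ℕ) :
    (Finset.univ.filter (fun v : Fin k → ZMod 2 => v ≠ 0)).card = 2 ^ k - 1 := by
  rw [Finset.filter_ne', Finset.card_erase_of_mem (Finset.mem_univ _), Finset.card_univ]
  simp [Fintype.card_fun]

lemma mkInv_main (k : ℕ) (hk : 2 ≤ k) (Q : ℕ) :
    mkInv k ((2 ^ (k - 1) - 1) * Q) = (2 ^ k - 1) * Q := by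
  have hpos : 0 < 2 ^ (k - 1) - 1 := by
    have h1 : 1 ≤ k - 1 := by omega
    have : 2 ^ 1 ≤ 2 ^ (k - 1) := Nat.pow_le_pow_right (by norm_num) h1
    omega
  apply IsGreatest.csSup_eq
  constructor
  · refine ⟨fun _ => Q, fun u hu => ?_, ?_⟩
    · rw [Finset.sum_const, card_ker' u hu, smul_eq_mul]
    · rw [Finset.sum_const, card_nonzero, smul_eq_mul]
  · rintro m ⟨a, hcon, hsum⟩
    have key : (2 ^ (k - 1) - 1) * m ≤ (2 ^ (k - 1) - 1) * ((2 ^ k - 1) * Q) := by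
      calc (2 ^ (k - 1) - 1) * m
          = ∑ v ∈ Finset.univ.filter (fun v : Fin k → ZMod 2 => v ≠ 0),
              (2 ^ (k - 1) - 1) * a v := by rw [← Finset.mul_sum, hsum]
        _ = ∑ v ∈ Finset.univ.filter (fun v : Fin k → ZMod 2 => v ≠ 0),
              ∑ _u ∈ Finset.univ.filter
                (fun u : Fin k → ZMod 2 => u ≠ 0 ∧ dotProduct u v = 0), a v := by
            refine Finset.sum_congr rfl fun v hv => ?_
            have hv0 : v ≠ 0 := (Finset.mem_filter.mp hv).2
            have hswap : Finset.univ.filter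
                (fun u : Fin k → ZMod 2 => u ≠ 0 ∧ dotProduct u v = 0)
                = Finset.univ.filter
                (fun u : Fin k → ZMod 2 => u ≠ 0 ∧ dotProduct v u = 0) := by
              refine Finset.filter_congr fun u _ => ?_
              rw [dotProduct_comm]
            rw [Finset.sum_const, hswap, card_ker' v hv0, smul_eq_mul]
        _ = ∑ u ∈ Finset.univ.filter (fun u : Fin k → ZMod 2 => u ≠ 0),
              ∑ v ∈ Finset.univ.filter
                (fun v : Fin k → ZMod 2 => v ≠ 0 ∧ dotProduct u v = 0), a v := by
            exact Finset.sum_comm' (f := fun v _u => a v) (by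
              intro x y
              simp only [Finset.mem_filter, Finset.mem_univ, true_and]
              tauto)
        _ ≤ ∑ u ∈ Finset.univ.filter (fun u : Fin k → ZMod 2 => u ≠ 0),
              (2 ^ (k - 1) - 1) * Q := by
            refine Finset.sum_le_sum fun u hu => ?_
            exact hcon u (Finset.mem_filter.mp hu).2
        _ = (2 ^ (k - 1) - 1) * ((2 ^ k - 1) * Q) := by
            rw [Finset.sum_const, card_nonzero, smul_eq_mul]
            ring
    exact Nat.le_of_mul_le_mul_left key hpos

theorem mkInv_of_divisible (k : ℕ) (hk : 2 ≤ k) :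
    (∀ Q : ℕ, mkInv k ((2 ^ (k - 1) - 1) * Q) = (2 ^ k - 1) * Q) ∧
    (∀ b : ℕ, mkInv 2 b = 3 * b) := by
  refine ⟨fun Q => mkInv_main k hk Q, fun b => ?_⟩
  have := mkInv_main 2 le_rfl b
  norm_num at this
  exact this
end

section
/- For k ≥ 2 and any non-negative integer b, m_k(b) ≤ ⌊(2^k − 1)b/(2^{k−1} − 1)⌋ = 2b + ⌊b/(2^{k−1} − 1)⌋. -/
open Matrix Finset

/-- The linear functional `u ↦ u ⬝ᵥ v`. -/
def dotMap (k : ℕ) (v : Fin k → ZMod 2) : (Fin k → ZMod 2) →ₗ[ZMod 2] ZMod 2 where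
  toFun u := dotProduct u v
  map_add' x y := add_dotProduct x y v
  map_smul' c x := smul_dotProduct c x v

lemma card_orth (k : ℕ) (v : Fin k → ZMod 2) (hv : v ≠ 0) :
    (Finset.univ.filter (fun u : Fin k → ZMod 2 => dotProduct u v = 0)).card
      = 2 ^ (k - 1) := by
  have hsurj : Function.Surjective (dotMap k v) := by
    obtain ⟨i, hi⟩ : ∃ i, v i ≠ 0 := by
      by_contra h
      push_neg at h
      exact hv (funext fun i => h i)
    intro c
    have hvi : v i = 1 := by
      have h2 : ∀ x : ZMod 2, x ≠ 0 → x = 1 := by decide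
      exact h2 _ hi
    refine ⟨Pi.single i c, ?_⟩
    simp [dotMap, single_dotProduct, hvi]
  have hrank : Module.finrank (ZMod 2) (LinearMap.ker (dotMap k v)) = k - 1 := by
    have h1 := LinearMap.finrank_range_add_finrank_ker (dotMap k v)
    rw [LinearMap.range_eq_top.mpr hsurj, finrank_top] at h1
    simp [Module.finrank_self, Module.finrank_pi] at h1
    omega
  haveI : Fintype (LinearMap.ker (dotMap k v)) := Fintype.ofFinite _
  have hcard : Nat.card (LinearMap.ker (dotMap k v)) = 2 ^ (k - 1) := by
    rw [Nat.card_eq_fintype_card, Module.card_eq_pow_finrank (K := ZMod 2), hrank, ZMod.card]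
  have h2 : (Finset.univ.filter (fun u : Fin k → ZMod 2 => dotProduct u v = 0)).card
      = Nat.card {u : Fin k → ZMod 2 // dotProduct u v = 0} := by
    rw [Nat.card_eq_fintype_card, Fintype.card_subtype]
  rw [h2, ← hcard]
  exact Nat.card_congr (Equiv.subtypeEquivRight (fun u => by
    simp only [LinearMap.mem_ker, dotMap, LinearMap.coe_mk, AddHom.coe_mk])).symm

lemma card_orth_ne (k : ℕ) (v : Fin k → ZMod 2) (hv : v ≠ 0) :
    (Finset.univ.filter (fun u : Fin k → ZMod 2 =>
      u ≠ 0 ∧ dotProduct u v = 0)).card = 2 ^ (k - 1) - 1 := by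
  have h : Finset.univ.filter (fun u : Fin k → ZMod 2 =>
      u ≠ 0 ∧ dotProduct u v = 0)
      = (Finset.univ.filter (fun u : Fin k → ZMod 2 =>
          dotProduct u v = 0)).erase 0 := by
    ext u
    simp [Finset.mem_erase, and_comm]
  rw [h, Finset.card_erase_of_mem (by simp [zero_dotProduct]), card_orth k v hv]

theorem mkInv_upper_bound (k b : ℕ) (hk : 2 ≤ k) :
    mkInv k b ≤ (2 ^ k - 1) * b / (2 ^ (k - 1) - 1) ∧
    (2 ^ k - 1) * b / (2 ^ (k - 1) - 1) = 2 * b + b / (2 ^ (k - 1) - 1) := by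
  have hp2 : 2 ≤ 2 ^ (k - 1) := by
    calc 2 = 2 ^ 1 := rfl
    _ ≤ 2 ^ (k - 1) := Nat.pow_le_pow_right (by norm_num) (by omega)
  have hd : 0 < 2 ^ (k - 1) - 1 := by omega
  have hkk : 2 ^ k = 2 * 2 ^ (k - 1) := by
    rw [← pow_succ']
    congr 1
    omega
  constructor
  · apply csSup_le'
    rintro m ⟨a, hcon, hsum⟩
    rw [Nat.le_div_iff_mul_le hd]
    set N : Finset (Fin k → ZMod 2) :=
      Finset.univ.filter (fun v : Fin k → ZMod 2 => v ≠ 0) with hN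
    have hNcard : N.card = 2 ^ k - 1 := by
      rw [hN, Finset.filter_ne', Finset.card_erase_of_mem (Finset.mem_univ 0),
        Finset.card_univ, Fintype.card_fun, ZMod.card, Fintype.card_fin]
    have key : ∑ u ∈ N, ∑ v ∈ Finset.univ.filter
        (fun v : Fin k → ZMod 2 => v ≠ 0 ∧ dotProduct u v = 0), a v
        = m * (2 ^ (k - 1) - 1) := by
      have step : ∀ u ∈ N, ∑ v ∈ Finset.univ.filter
          (fun v : Fin k → ZMod 2 => v ≠ 0 ∧ dotProduct u v = 0), a v
          = ∑ v ∈ N, if dotProduct u v = 0 then a v else 0 := by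
        intro u _
        rw [hN, Finset.sum_filter, Finset.sum_filter]
        apply Finset.sum_congr rfl
        intro v _
        by_cases h1 : v = 0 <;> by_cases h2 : dotProduct u v = 0 <;> simp [h1, h2]
      rw [Finset.sum_congr rfl step, Finset.sum_comm]
      rw [← hsum, Finset.sum_mul]
      apply Finset.sum_congr rfl
      intro v hv
      rw [hN, Finset.mem_filter] at hv
      rw [← Finset.sum_filter, Finset.sum_const, smul_eq_mul, mul_comm]
      congr 1
      rw [hN, Finset.filter_filter]
      exact card_orth_ne k v hv.2
    have h2 : ∑ u ∈ N, ∑ v ∈ Finset.univ.filter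
        (fun v : Fin k → ZMod 2 => v ≠ 0 ∧ dotProduct u v = 0), a v
        ≤ ∑ u ∈ N, b := by
      apply Finset.sum_le_sum
      intro u hu
      rw [hN, Finset.mem_filter] at hu
      exact hcon u hu.2
    rw [key, Finset.sum_const, smul_eq_mul, hNcard] at h2
    exact h2
  · have h1 : (2 ^ k - 1) * b = b + (2 ^ (k - 1) - 1) * (2 * b) := by
      have : 2 ^ k - 1 = 1 + 2 * (2 ^ (k - 1) - 1) := by omega
      rw [this]
      ring
    rw [h1, Nat.add_mul_div_left _ _ hd, Nat.add_comm]
end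

section
/- For k ≥ 3 and every non-negative integer b, m_k(b) ≤ m_{k−1}(b). -/
open Matrix Finset

lemma zmod2_eq_one {x : ZMod 2} (h : x ≠ 0) : x = 1 := by revert h; revert x; decide

lemma sum_zmod2 {M : Type*} [AddCommMonoid M] (g : ZMod 2 → M) : ∑ t, g t = g 0 + g 1 := by
  have : (univ : Finset (ZMod 2)) = {0, 1} := by decide
  rw [this, Finset.sum_insert (by decide), Finset.sum_singleton]

lemma cons_dot {n : ℕ} (x y : ZMod 2) (u v : Fin n → ZMod 2) :
    dotProduct (Fin.cons x u) (Fin.cons y v) = x * y + dotProduct u v := by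
  simp [dotProduct, Fin.sum_univ_succ]

lemma consZeroZero {n : ℕ} : (Fin.cons 0 0 : Fin (n+1) → ZMod 2) = 0 := by
  ext i; exact Fin.cases rfl (fun _ => rfl) i

lemma cons_ne_zero_iff {n : ℕ} (x : ZMod 2) (v : Fin n → ZMod 2) :
    (Fin.cons x v : Fin (n+1) → ZMod 2) ≠ 0 ↔ ¬(x = 0 ∧ v = 0) := by
  constructor
  · rintro h ⟨rfl, rfl⟩; exact h consZeroZero
  · intro h hc
    apply h
    constructor
    · have := congrFun hc 0; simpa using this
    · ext i; have := congrFun hc i.succ; simpa using this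

lemma exists_orth {n : ℕ} (hn : 2 ≤ n) (v : Fin n → ZMod 2) (hv : v ≠ 0) :
    ∃ u : Fin n → ZMod 2, u ≠ 0 ∧ dotProduct u v = 0 := by
  obtain ⟨i, hi⟩ := Function.ne_iff.mp hv
  obtain ⟨j, hj⟩ := Fintype.exists_ne_of_one_lt_card (by simp; omega) i
  by_cases hvj : v j = 0
  · refine ⟨Pi.single j 1, ?_, ?_⟩
    · intro h; have := congrFun h j; simp [Pi.single_eq_same] at this
    · rw [single_dotProduct, hvj, mul_zero]
  · refine ⟨Pi.single i 1 + Pi.single j 1, ?_, ?_⟩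
    · intro h; have := congrFun h j
      simp [Pi.single_eq_same, Pi.single_eq_of_ne hj] at this
    · rw [add_dotProduct, single_dotProduct, single_dotProduct,
        one_mul, one_mul, zmod2_eq_one hi, zmod2_eq_one hvj]
      decide

theorem mkInv_antitone_k (k b : ℕ) (hk : 3 ≤ k) : mkInv k b ≤ mkInv (k - 1) b := by
  obtain ⟨k', rfl⟩ : ∃ k', k = k' + 1 := ⟨k - 1, by omega⟩
  have hk' : 2 ≤ k' := by omega
  simp only [Nat.add_sub_cancel]
  unfold mkInv
  apply csSup_le_csSup'
  · -- bounded above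
    refine ⟨Fintype.card (Fin k' → ZMod 2) * b, ?_⟩
    rintro m ⟨a, h1, h2⟩
    rw [← h2]
    calc ∑ v ∈ Finset.univ.filter (fun v : Fin k' → ZMod 2 => v ≠ 0), a v
        ≤ ∑ _v ∈ Finset.univ.filter (fun v : Fin k' → ZMod 2 => v ≠ 0), b := by
          apply Finset.sum_le_sum
          intro v hv
          obtain ⟨u, hu, huv⟩ := exists_orth hk' v (by simpa using (Finset.mem_filter.mp hv).2)
          calc a v ≤ ∑ w ∈ Finset.univ.filter
                (fun w : Fin k' → ZMod 2 => w ≠ 0 ∧ dotProduct u w = 0), a w := by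
                  apply Finset.single_le_sum (fun _ _ => Nat.zero_le _)
                  simp only [Finset.mem_filter, Finset.mem_univ, true_and]
                  exact ⟨(Finset.mem_filter.mp hv).2, huv⟩
            _ ≤ b := h1 u hu
      _ ≤ Fintype.card (Fin k' → ZMod 2) * b := by
          rw [Finset.sum_const, smul_eq_mul]
          exact Nat.mul_le_mul_right b (le_trans (Finset.card_filter_le _ _) (by simp))
  · -- subset
    rintro m ⟨a, h1, h2⟩
    set i0 : Fin k' := ⟨0, by omega⟩
    set w : Fin k' → ZMod 2 := Pi.single i0 1 with hw
    have hw0 : w ≠ 0 := by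
      intro h; have := congrFun h i0; simp [hw, Pi.single_eq_same] at this
    set c : ℕ := a (Fin.cons 1 0) with hc
    refine ⟨fun v' => a (Fin.cons 0 v') + a (Fin.cons 1 v') + (if v' = w then c else 0), ?_, ?_⟩
    · -- constraints
      intro u' hu'
      set u : Fin (k'+1) → ZMod 2 := Fin.cons 0 u' with hu
      have hune : u ≠ 0 := (cons_ne_zero_iff _ _).mpr (by tauto)
      set T := Finset.univ.filter
        (fun v' : Fin k' → ZMod 2 => v' ≠ 0 ∧ dotProduct u' v' = 0) with hT
      set S := Finset.univ.filter
        (fun v : Fin (k'+1) → ZMod 2 => v ≠ 0 ∧ dotProduct u v = 0) with hS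
      have hinj0 : Function.Injective
          (fun p : Fin k' → ZMod 2 => (Fin.cons 0 p : Fin (k'+1) → ZMod 2)) :=
        fun p q h => by simpa using congrArg Fin.tail h
      have hinj1 : Function.Injective
          (fun p : Fin k' → ZMod 2 => (Fin.cons 1 p : Fin (k'+1) → ZMod 2)) :=
        fun p q h => by simpa using congrArg Fin.tail h
      have key : ∑ v' ∈ T, a (Fin.cons 0 v') + ∑ v' ∈ T, a (Fin.cons 1 v') + c
          ≤ ∑ v ∈ S, a v := by
        set A := T.image (fun p : Fin k' → ZMod 2 => (Fin.cons 0 p : Fin (k'+1) → ZMod 2)) with hA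
        set B := T.image (fun p : Fin k' → ZMod 2 => (Fin.cons 1 p : Fin (k'+1) → ZMod 2)) with hB
        have memT : ∀ p ∈ T, p ≠ 0 ∧ dotProduct u' p = 0 := by
          intro p hp; exact (Finset.mem_filter.mp hp).2
        have hAB : Disjoint A B := by
          rw [Finset.disjoint_left]
          rintro x hxA hxB
          obtain ⟨p, _, rfl⟩ := Finset.mem_image.mp hxA
          obtain ⟨q, _, heq⟩ := Finset.mem_image.mp hxB
          have := congrFun heq 0; simp at this
        have hCnot : Fin.cons 1 (0 : Fin k' → ZMod 2) ∉ A ∪ B := by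
          intro h
          rcases Finset.mem_union.mp h with h | h
          · obtain ⟨p, _, heq⟩ := Finset.mem_image.mp h
            have := congrFun heq 0; simp at this
          · obtain ⟨p, hp, heq⟩ := Finset.mem_image.mp h
            have : p = 0 := by simpa using congrArg Fin.tail heq
            exact (memT p hp).1 this
        have hsub : A ∪ B ∪ {Fin.cons 1 0} ⊆ S := by
          intro x hx
          simp only [hS, Finset.mem_filter, Finset.mem_univ, true_and]
          rcases Finset.mem_union.mp hx with h | h
          · rcases Finset.mem_union.mp h with h | h
            · obtain ⟨p, hp, rfl⟩ := Finset.mem_image.mp h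
              refine ⟨(cons_ne_zero_iff _ _).mpr (fun h => (memT p hp).1 h.2), ?_⟩
              rw [hu, cons_dot, (memT p hp).2]; ring
            · obtain ⟨p, hp, rfl⟩ := Finset.mem_image.mp h
              refine ⟨(cons_ne_zero_iff _ _).mpr (fun h => one_ne_zero h.1), ?_⟩
              rw [hu, cons_dot, (memT p hp).2]; ring
          · rw [Finset.mem_singleton.mp h]
            refine ⟨(cons_ne_zero_iff _ _).mpr (fun h => one_ne_zero h.1), ?_⟩
            rw [hu, cons_dot]; simp [dotProduct]
        calc ∑ v' ∈ T, a (Fin.cons 0 v') + ∑ v' ∈ T, a (Fin.cons 1 v') + c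
            = ∑ v ∈ A, a v + ∑ v ∈ B, a v + ∑ v ∈ ({Fin.cons 1 0} : Finset _), a v := by
              rw [Finset.sum_image (fun p _ q _ h => hinj0 h),
                Finset.sum_image (fun p _ q _ h => hinj1 h), Finset.sum_singleton]
          _ = ∑ v ∈ A ∪ B ∪ {Fin.cons 1 0}, a v := by
              rw [Finset.sum_union (Finset.disjoint_singleton_right.mpr hCnot),
                Finset.sum_union hAB]
          _ ≤ ∑ v ∈ S, a v := Finset.sum_le_sum_of_subset hsub
      have expand : ∑ v' ∈ T, (a (Fin.cons 0 v') + a (Fin.cons 1 v') + (if v' = w then c else 0))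
          = ∑ v' ∈ T, a (Fin.cons 0 v') + ∑ v' ∈ T, a (Fin.cons 1 v')
            + (if w ∈ T then c else 0) := by
        rw [Finset.sum_add_distrib, Finset.sum_add_distrib, Finset.sum_ite_eq' T w (fun _ => c)]
      have hite : (if w ∈ T then c else 0) ≤ c := by split <;> omega
      have := h1 u hune
      rw [← hS] at this
      beta_reduce
      rw [expand]
      omega
    · -- total sum
      have Etot : ∑ v : Fin (k'+1) → ZMod 2, a v
          = ∑ v' : Fin k' → ZMod 2, a (Fin.cons 0 v') + ∑ v' : Fin k' → ZMod 2, a (Fin.cons 1 v') := by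
        have hbij : Function.Bijective
            (fun p : ZMod 2 × (Fin k' → ZMod 2) => (Fin.cons p.1 p.2 : Fin (k'+1) → ZMod 2)) := by
          rw [Function.bijective_iff_has_inverse]
          exact ⟨fun v => (v 0, Fin.tail v), fun p => by simp, fun v => Fin.cons_self_tail v⟩
        have h0 : ∑ v : Fin (k'+1) → ZMod 2, a v
            = ∑ p : ZMod 2 × (Fin k' → ZMod 2), a (Fin.cons p.1 p.2) :=
          (Fintype.sum_bijective _ hbij _ _ (fun p => rfl)).symm
        rw [h0, Fintype.sum_prod_type, sum_zmod2 (fun t => ∑ v' : Fin k' → ZMod 2, a (Fin.cons t v'))]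
      have split1 : ∑ v' ∈ Finset.univ.filter (fun v' : Fin k' → ZMod 2 => v' ≠ 0),
            (a (Fin.cons 0 v') + a (Fin.cons 1 v') + (if v' = w then c else 0))
          + (a 0 + c)
          = ∑ v' : Fin k' → ZMod 2, (a (Fin.cons 0 v') + a (Fin.cons 1 v') + (if v' = w then c else 0)) := by
        rw [← Finset.sum_filter_add_sum_filter_not Finset.univ (fun v' : Fin k' → ZMod 2 => v' ≠ 0)]
        congr 1
        have : Finset.univ.filter (fun v' : Fin k' → ZMod 2 => ¬ v' ≠ 0) = {0} := by
          ext v'; simp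
        rw [this, Finset.sum_singleton]
        show a 0 + c = a (Fin.cons 0 0) + a (Fin.cons 1 0) + (if (0 : Fin k' → ZMod 2) = w then c else 0)
        rw [consZeroZero, if_neg (Ne.symm hw0)]
        omega
      have split2 : ∑ v ∈ Finset.univ.filter (fun v : Fin (k'+1) → ZMod 2 => v ≠ 0), a v + a 0
          = ∑ v : Fin (k'+1) → ZMod 2, a v := by
        rw [← Finset.sum_filter_add_sum_filter_not Finset.univ (fun v : Fin (k'+1) → ZMod 2 => v ≠ 0)]
        congr 1
        have : Finset.univ.filter (fun v : Fin (k'+1) → ZMod 2 => ¬ v ≠ 0) = {0} := by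
          ext v; simp
        rw [this, Finset.sum_singleton]
      have Eite : ∑ v' : Fin k' → ZMod 2, (if v' = w then c else 0) = c := by
        rw [Finset.sum_ite_eq' Finset.univ w (fun _ => c), if_pos (Finset.mem_univ w)]
      have Efull : ∑ v' : Fin k' → ZMod 2, (a (Fin.cons 0 v') + a (Fin.cons 1 v') + (if v' = w then c else 0))
          = ∑ v : Fin (k'+1) → ZMod 2, a v + c := by
        rw [Finset.sum_add_distrib, Finset.sum_add_distrib, Eite, Etot]
      beta_reduce
      omega
end

section
/- For k ≥ 2: m_k(b) = b when 0 ≤ b ≤ k − 2, and m_k(k−1) = k+1. -/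
open Matrix Finset

namespace MkAux
variable {k : ℕ}

lemma zmod2_cases (x : ZMod 2) : x = 0 ∨ x = 1 := by revert x; decide

def dotL (w : Fin k → ZMod 2) : (Fin k → ZMod 2) →ₗ[ZMod 2] ZMod 2 where
  toFun u := dotProduct u w
  map_add' a b := add_dotProduct a b w
  map_smul' c a := by simp [smul_dotProduct, smul_eq_mul]

lemma exists_orth (T : Finset (Fin k → ZMod 2)) (hT : T.card < k) :
    ∃ u : Fin k → ZMod 2, u ≠ 0 ∧ ∀ v ∈ T, dotProduct u v = 0 := by
  classical
  set φ : (Fin k → ZMod 2) →ₗ[ZMod 2] (↥T → ZMod 2) :=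
    LinearMap.pi (fun v : ↥T => dotL (v : Fin k → ZMod 2)) with hφ
  have hker : LinearMap.ker φ ≠ ⊥ := by
    intro h
    have hinj : Function.Injective φ := LinearMap.ker_eq_bot.mp h
    have hle := LinearMap.finrank_le_finrank_of_injective hinj
    rw [Module.finrank_fin_fun, Module.finrank_pi] at hle
    simp only [Fintype.card_coe] at hle
    omega
  obtain ⟨u, hu, hune⟩ := (Submodule.ne_bot_iff _).mp hker
  refine ⟨u, hune, fun v hv => ?_⟩
  have := congrFun (LinearMap.mem_ker.mp hu) ⟨v, hv⟩
  simpa [hφ, dotL] using this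

lemma dot_span (u : Fin k → ZMod 2) (T : Set (Fin k → ZMod 2))
    (h : ∀ v ∈ T, dotProduct u v = 0) :
    ∀ x ∈ Submodule.span (ZMod 2) T, dotProduct u x = 0 := by
  intro x hx
  induction hx using Submodule.span_induction with
  | mem v hv => exact h v hv
  | zero => simp
  | add x y _ _ hx hy => rw [dotProduct_add, hx, hy, add_zero]
  | smul c x _ hx => rw [dotProduct_smul, hx, smul_zero]

lemma key (hk : 2 ≤ k) (a : (Fin k → ZMod 2) → ℕ)
    (hb : ∀ u : Fin k → ZMod 2, u ≠ 0 →
      ∑ v ∈ Finset.univ.filter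
        (fun v : Fin k → ZMod 2 => v ≠ 0 ∧ dotProduct u v = 0), a v ≤ k - 1)
    (T : Finset (Fin k → ZMod 2))
    (hTV : ∀ v ∈ T, v ≠ 0 ∧ a v ≠ 0) (hcard : T.card = k - 1) :
    (∀ v ∈ T, a v = 1) ∧
    (∀ w : Fin k → ZMod 2, w ≠ 0 → a w ≠ 0 →
      w ∈ Submodule.span (ZMod 2) (T : Set (Fin k → ZMod 2)) → w ∈ T) := by
  classical
  obtain ⟨u, hu0, hu⟩ := exists_orth T (by omega)
  have hTF : T ⊆ Finset.univ.filter
      (fun v : Fin k → ZMod 2 => v ≠ 0 ∧ dotProduct u v = 0) := by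
    intro v hv
    simp [Finset.mem_filter, (hTV v hv).1, hu v hv]
  have hsum : ∑ v ∈ T, a v ≤ k - 1 :=
    le_trans (Finset.sum_le_sum_of_subset hTF) (hb u hu0)
  have hsumge : T.card ≤ ∑ v ∈ T, a v := by
    calc T.card = ∑ _v ∈ T, 1 := by simp
    _ ≤ ∑ v ∈ T, a v := Finset.sum_le_sum (fun v hv => by have := (hTV v hv).2; omega)
  constructor
  · intro v hv
    by_contra hne
    have hlt : ∑ _v ∈ T, 1 < ∑ v ∈ T, a v :=
      Finset.sum_lt_sum (fun w hw => by have := (hTV w hw).2; omega)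
        ⟨v, hv, by have := (hTV v hv).2; omega⟩
    simp only [Finset.sum_const, smul_eq_mul, mul_one] at hlt
    omega
  · intro w hw0 hwa hwspan
    by_contra hwT
    have hdw : dotProduct u w = 0 := dot_span u _ hu w hwspan
    have hins : insert w T ⊆ Finset.univ.filter
        (fun v : Fin k → ZMod 2 => v ≠ 0 ∧ dotProduct u v = 0) := by
      intro v hv
      rcases Finset.mem_insert.mp hv with h | h
      · subst h; simp [hw0, hdw]
      · exact hTF h
    have hle : ∑ v ∈ insert w T, a v ≤ k - 1 :=
      le_trans (Finset.sum_le_sum_of_subset hins) (hb u hu0)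
    rw [Finset.sum_insert hwT] at hle
    omega


lemma sum_eq_suppsum (a : (Fin k → ZMod 2) → ℕ) :
    ∑ v ∈ Finset.univ.filter (fun v : Fin k → ZMod 2 => v ≠ 0), a v
      = ∑ v ∈ Finset.univ.filter (fun v : Fin k → ZMod 2 => v ≠ 0 ∧ a v ≠ 0), a v := by
  classical
  rw [show Finset.univ.filter (fun v : Fin k → ZMod 2 => v ≠ 0 ∧ a v ≠ 0)
      = (Finset.univ.filter (fun v : Fin k → ZMod 2 => v ≠ 0)).filter (fun v => a v ≠ 0) by
    rw [Finset.filter_filter]]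
  rw [Finset.sum_filter_ne_zero]

lemma upper_small (hk : 2 ≤ k) (b : ℕ) (hbk : b ≤ k - 2)
    (a : (Fin k → ZMod 2) → ℕ)
    (hb : ∀ u : Fin k → ZMod 2, u ≠ 0 →
      ∑ v ∈ Finset.univ.filter
        (fun v : Fin k → ZMod 2 => v ≠ 0 ∧ dotProduct u v = 0), a v ≤ b) :
    ∑ v ∈ Finset.univ.filter (fun v : Fin k → ZMod 2 => v ≠ 0), a v ≤ b := by
  classical
  rw [sum_eq_suppsum]
  set V := Finset.univ.filter (fun v : Fin k → ZMod 2 => v ≠ 0 ∧ a v ≠ 0) with hV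
  have hVmem : ∀ v ∈ V, v ≠ 0 ∧ a v ≠ 0 := fun v hv => by
    simpa [hV] using hv
  rcases lt_or_ge V.card k with h | h
  · obtain ⟨u, hu0, hu⟩ := exists_orth V h
    have hsub : V ⊆ Finset.univ.filter
        (fun v : Fin k → ZMod 2 => v ≠ 0 ∧ dotProduct u v = 0) := by
      intro v hv
      simp [(hVmem v hv).1, hu v hv]
    exact le_trans (Finset.sum_le_sum_of_subset hsub) (hb u hu0)
  · exfalso
    obtain ⟨T, hTV, hTc⟩ := Finset.exists_subset_card_eq
      (show k - 1 ≤ V.card by omega)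
    obtain ⟨u, hu0, hu⟩ := exists_orth T (by omega)
    have hsub : T ⊆ Finset.univ.filter
        (fun v : Fin k → ZMod 2 => v ≠ 0 ∧ dotProduct u v = 0) := by
      intro v hv
      simp [(hVmem v (hTV hv)).1, hu v hv]
    have hge : T.card ≤ ∑ v ∈ T, a v := by
      calc T.card = ∑ _v ∈ T, 1 := by simp
      _ ≤ ∑ v ∈ T, a v := Finset.sum_le_sum
        (fun v hv => by have := (hVmem v (hTV hv)).2; omega)
    have := le_trans (Finset.sum_le_sum_of_subset hsub) (hb u hu0)
    omega


lemma upper_big (hk : 2 ≤ k)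
    (a : (Fin k → ZMod 2) → ℕ)
    (hb : ∀ u : Fin k → ZMod 2, u ≠ 0 →
      ∑ v ∈ Finset.univ.filter
        (fun v : Fin k → ZMod 2 => v ≠ 0 ∧ dotProduct u v = 0), a v ≤ k - 1) :
    ∑ v ∈ Finset.univ.filter (fun v : Fin k → ZMod 2 => v ≠ 0), a v ≤ k + 1 := by
  classical
  rw [sum_eq_suppsum]
  set V := Finset.univ.filter (fun v : Fin k → ZMod 2 => v ≠ 0 ∧ a v ≠ 0) with hV
  have hVmem : ∀ v ∈ V, v ≠ 0 ∧ a v ≠ 0 := fun v hv => by simpa [hV] using hv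
  obtain ⟨t, hts, hsp, hli⟩ := exists_linearIndependent (ZMod 2) (↑V : Set (Fin k → ZMod 2))
  have htfin : t.Finite := Set.Finite.subset V.finite_toSet hts
  haveI : Fintype ↥t := htfin.fintype
  set tF : Finset (Fin k → ZMod 2) := htfin.toFinset with htF
  have htFt : (tF : Set (Fin k → ZMod 2)) = t := htfin.coe_toFinset
  have htFV : tF ⊆ V := by
    intro x hx
    have : x ∈ t := by rwa [htfin.mem_toFinset] at hx
    exact hts this
  have hcardt : Fintype.card ↥t = tF.card := (htfin.card_toFinset).symm
  have hcard_le : tF.card ≤ k := by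
    have := hli.fintype_card_le_finrank
    rwa [Module.finrank_fin_fun, hcardt] at this
  rcases lt_or_ge tF.card k with h | h
  · -- span is proper: orthogonal vector kills all of V
    obtain ⟨u, hu0, hu⟩ := exists_orth tF h
    have huspan : ∀ x ∈ Submodule.span (ZMod 2) (↑V : Set (Fin k → ZMod 2)),
        dotProduct u x = 0 := by
      rw [← hsp]
      exact dot_span u t (fun v hv => hu v (by rwa [htfin.mem_toFinset]))
    have hsub : V ⊆ Finset.univ.filter
        (fun v : Fin k → ZMod 2 => v ≠ 0 ∧ dotProduct u v = 0) := by
      intro v hv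
      simp [(hVmem v hv).1, huspan v (Submodule.subset_span (by exact_mod_cast hv))]
    have := le_trans (Finset.sum_le_sum_of_subset hsub) (hb u hu0)
    omega
  · -- tF.card = k
    have hcard : tF.card = k := le_antisymm hcard_le h
    have hVcard_ge : k ≤ V.card := by
      have := Finset.card_le_card htFV; omega
    -- every a v = 1 on V
    have hone : ∀ v ∈ V, a v = 1 := by
      intro v hv
      obtain ⟨T', hT'sub, hT'c⟩ := Finset.exists_subset_card_eq
        (show k - 2 ≤ (V.erase v).card by rw [Finset.card_erase_of_mem hv]; omega)
      have hvT' : v ∉ T' := fun hmem => by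
        have := hT'sub hmem; simp at this
      have hTcard : (insert v T').card = k - 1 := by
        rw [Finset.card_insert_of_notMem hvT', hT'c]; omega
      have hTsubV : ∀ w ∈ insert v T', w ≠ 0 ∧ a w ≠ 0 := by
        intro w hw
        rcases Finset.mem_insert.mp hw with h' | h'
        · subst h'; exact hVmem w hv
        · exact hVmem w (Finset.mem_of_mem_erase (hT'sub h'))
      exact (key hk a hb (insert v T') hTsubV hTcard).1 v (Finset.mem_insert_self v T')
    -- basis
    have hne : Nonempty ↥t := by
      rw [← Fintype.card_pos_iff, hcardt]; omega
    have hspan_top : ⊤ ≤ Submodule.span (ZMod 2) (Set.range (Subtype.val : ↥t → Fin k → ZMod 2)) :=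
      le_of_eq (hli.span_eq_top_of_card_eq_finrank
        (by rw [Module.finrank_fin_fun, hcardt, hcard])).symm
    set B : Module.Basis ↥t (ZMod 2) (Fin k → ZMod 2) := Module.Basis.mk hli hspan_top with hB
    set s0 : Fin k → ZMod 2 := ∑ x ∈ tF, x with hs0
    have hVsub : V ⊆ insert s0 tF := by
      intro w hw
      by_cases hwt : w ∈ tF
      · exact Finset.mem_insert_of_mem hwt
      · -- show w = s0
        have hw0 := (hVmem w hw).1
        have hwa := (hVmem w hw).2
        have heq : w = ∑ j : ↥t, B.repr w j • (j : Fin k → ZMod 2) := by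
          conv_lhs => rw [← B.sum_repr w]
          exact Finset.sum_congr rfl fun j _ => by rw [hB, Module.Basis.mk_apply]
        have hcoord : ∀ i : ↥t, B.repr w i = 1 := by
          intro i
          rcases zmod2_cases (B.repr w i) with h0 | h1
          · exfalso
            have hiF : (i : Fin k → ZMod 2) ∈ tF := htfin.mem_toFinset.mpr i.2
            have hmem : w ∈ Submodule.span (ZMod 2)
                ((tF.erase (i : Fin k → ZMod 2)) : Set (Fin k → ZMod 2)) := by
              rw [heq]
              apply Submodule.sum_mem
              intro j _
              by_cases hji : j = i
              · rw [hji, h0, zero_smul]; exact Submodule.zero_mem _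
              · refine Submodule.smul_mem _ _ (Submodule.subset_span ?_)
                have hjmem : (j : Fin k → ZMod 2) ∈ tF.erase (i : Fin k → ZMod 2) :=
                  Finset.mem_erase.mpr ⟨fun hval => hji (Subtype.ext hval),
                    htfin.mem_toFinset.mpr j.2⟩
                exact_mod_cast hjmem
            have herased : ∀ v ∈ tF.erase (i : Fin k → ZMod 2), v ≠ 0 ∧ a v ≠ 0 :=
              fun v hv => hVmem v (htFV (Finset.mem_of_mem_erase hv))
            have hkey := (key hk a hb (tF.erase (i : Fin k → ZMod 2))
              herased (by rw [Finset.card_erase_of_mem hiF, hcard])).2 w hw0 hwa hmem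
            exact hwt (Finset.mem_of_mem_erase hkey)
          · exact h1
        have hwe : w = s0 := by
          rw [heq, hs0,
            Finset.sum_subtype tF (fun x => htfin.mem_toFinset) (fun x => x)]
          exact Finset.sum_congr rfl fun j _ => by rw [hcoord j, one_smul]
        rw [hwe]; exact Finset.mem_insert_self _ _
    calc ∑ v ∈ V, a v = ∑ v ∈ V, 1 := Finset.sum_congr rfl hone
      _ = V.card := by simp
      _ ≤ (insert s0 tF).card := Finset.card_le_card hVsub
      _ ≤ tF.card + 1 := Finset.card_insert_le _ _
      _ = k + 1 := by omega


lemma mem_small (hk : 2 ≤ k) (b : ℕ) :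
    ∃ a : (Fin k → ZMod 2) → ℕ,
      (∀ u : Fin k → ZMod 2, u ≠ 0 →
        ∑ v ∈ Finset.univ.filter
          (fun v : Fin k → ZMod 2 => v ≠ 0 ∧ dotProduct u v = 0), a v ≤ b) ∧
      ∑ v ∈ Finset.univ.filter (fun v : Fin k → ZMod 2 => v ≠ 0), a v = b := by
  classical
  have hone : (1 : Fin k → ZMod 2) ≠ 0 := by
    intro h
    have := congrFun h ⟨0, by omega⟩
    simp at this
  refine ⟨fun v => if v = 1 then b else 0, ?_, ?_⟩
  · intro u hu
    rw [Finset.sum_ite_eq']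
    split <;> omega
  · rw [Finset.sum_ite_eq']
    simp [hone]

lemma mem_big (hk : 2 ≤ k) :
    ∃ a : (Fin k → ZMod 2) → ℕ,
      (∀ u : Fin k → ZMod 2, u ≠ 0 →
        ∑ v ∈ Finset.univ.filter
          (fun v : Fin k → ZMod 2 => v ≠ 0 ∧ dotProduct u v = 0), a v ≤ k - 1) ∧
      ∑ v ∈ Finset.univ.filter (fun v : Fin k → ZMod 2 => v ≠ 0), a v = k + 1 := by
  classical
  set E : Finset (Fin k → ZMod 2) :=
    (Finset.univ.image fun i : Fin k => Pi.single i (1 : ZMod 2)) ∪ {1} with hE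
  have hsingle_ne : ∀ i : Fin k, (Pi.single i (1 : ZMod 2) : Fin k → ZMod 2) ≠ 0 := by
    intro i h
    have := congrFun h i
    simp at this
  have hone : (1 : Fin k → ZMod 2) ≠ 0 := by
    intro h
    have := congrFun h ⟨0, by omega⟩
    simp at this
  have hinj : Function.Injective (fun i : Fin k => Pi.single i (1 : ZMod 2)) := by
    intro i j hij
    by_contra hne
    have h := congrFun hij i
    simp only at h
    rw [Pi.single_eq_same, Pi.single_eq_of_ne hne] at h
    exact one_ne_zero h
  have hone_notin : (1 : Fin k → ZMod 2) ∉
      Finset.univ.image fun i : Fin k => Pi.single i (1 : ZMod 2) := by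
    intro hmem
    obtain ⟨i, _, hi⟩ := Finset.mem_image.mp hmem
    obtain ⟨j, hj⟩ := Fintype.exists_ne_of_one_lt_card (by simp; omega) i
    have := congrFun hi j
    rw [Pi.single_eq_of_ne hj] at this
    simp at this
  have hcardE : E.card = k + 1 := by
    rw [hE, Finset.card_union_of_disjoint (Finset.disjoint_singleton_right.mpr hone_notin),
      Finset.card_image_of_injective _ hinj]
    simp
  have hEne : ∀ v ∈ E, v ≠ 0 := by
    intro v hv
    rcases Finset.mem_union.mp hv with h | h
    · obtain ⟨i, _, hi⟩ := Finset.mem_image.mp h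
      exact hi ▸ hsingle_ne i
    · rw [Finset.mem_singleton.mp h]; exact hone
  refine ⟨fun v => if v ∈ E then 1 else 0, ?_, ?_⟩
  · intro u hu
    rw [← Finset.card_filter]
    set W := Finset.univ.filter (fun i : Fin k => u i = 1) with hW
    have hWpos : 1 ≤ W.card := by
      rcases Function.ne_iff.mp hu with ⟨i, hi⟩
      have : u i = 1 := by
        rcases zmod2_cases (u i) with h | h
        · exact absurd h (by simpa using hi)
        · exact h
      exact Finset.card_pos.mpr ⟨i, Finset.mem_filter.mpr ⟨Finset.mem_univ i, this⟩⟩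
    have hWle : W.card ≤ k := le_trans (Finset.card_filter_le _ _) (by simp)
    have hzero_card : (Finset.univ.filter (fun i : Fin k => u i = 0)).card = k - W.card := by
      have hcc := Finset.card_filter_add_card_filter_not
        (s := (Finset.univ : Finset (Fin k))) (fun i => u i = 1)
      have hfil : Finset.univ.filter (fun i : Fin k => ¬ u i = 1)
          = Finset.univ.filter (fun i : Fin k => u i = 0) := by
        apply Finset.filter_congr
        intro i _
        rcases zmod2_cases (u i) with h | h <;> simp [h]
      rw [hfil, ← hW] at hcc
      simp only [Finset.card_univ, Fintype.card_fin] at hcc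
      omega
    have hdot1 : dotProduct u 1 = (W.card : ZMod 2) := by
      have h1 : dotProduct u 1 = ∑ i, u i := by
        simp [dotProduct]
      rw [h1, ← Finset.sum_filter_ne_zero Finset.univ]
      have hfil : Finset.univ.filter (fun i : Fin k => u i ≠ 0) = W := by
        apply Finset.filter_congr
        intro i _
        rcases zmod2_cases (u i) with h | h <;> simp [h]
      rw [hfil]
      calc ∑ i ∈ W, u i = ∑ _i ∈ W, (1 : ZMod 2) :=
            Finset.sum_congr rfl fun i hi => (Finset.mem_filter.mp hi).2
        _ = (W.card : ZMod 2) := by simp [Finset.sum_const, nsmul_eq_mul]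
    -- rewrite the filtered set
    have hswap : (Finset.univ.filter
        (fun v : Fin k → ZMod 2 => v ≠ 0 ∧ dotProduct u v = 0)).filter (· ∈ E)
        = E.filter (fun v => v ≠ 0 ∧ dotProduct u v = 0) := by
      ext v
      simp only [Finset.mem_filter, Finset.mem_univ, true_and]
      tauto
    rw [hswap, hE, Finset.filter_union]
    refine le_trans (Finset.card_union_le _ _) ?_
    have hcard1 : ((Finset.univ.image fun i : Fin k => Pi.single i (1 : ZMod 2)).filter
        (fun v => v ≠ 0 ∧ dotProduct u v = 0)).card = k - W.card := by
      rw [Finset.filter_image, Finset.card_image_of_injective _ hinj]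
      rw [← hzero_card]
      congr 1
      apply Finset.filter_congr
      intro i _
      simp [hsingle_ne i, dotProduct_single]
    rw [hcard1]
    by_cases hdvd : 2 ∣ W.card
    · have hW2 : 2 ≤ W.card := by
        rcases hdvd with ⟨c, hc⟩; omega
      have : (Finset.filter (fun v => v ≠ 0 ∧ dotProduct u v = 0)
          ({1} : Finset (Fin k → ZMod 2))).card ≤ 1 :=
        le_trans (Finset.card_filter_le _ _) (by simp)
      omega
    · have hne0 : (W.card : ZMod 2) ≠ 0 := by
        rw [Ne, ZMod.natCast_eq_zero_iff]
        exact hdvd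
      have : (Finset.filter (fun v => v ≠ 0 ∧ dotProduct u v = 0)
          ({1} : Finset (Fin k → ZMod 2))) = ∅ := by
        rw [Finset.filter_singleton, if_neg]
        rintro ⟨-, h⟩
        exact hne0 (hdot1 ▸ h)
      rw [this]
      simp only [Finset.card_empty, add_zero]
      omega
  · rw [← Finset.card_filter]
    have : (Finset.univ.filter (fun v : Fin k → ZMod 2 => v ≠ 0)).filter (· ∈ E) = E := by
      ext v
      simp only [Finset.mem_filter, Finset.mem_univ, true_and]
      exact ⟨fun h => h.2, fun h => ⟨hEne v h, h⟩⟩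
    rw [this, hcardE]

end MkAux


theorem mkInv_small_b (k : ℕ) (hk : 2 ≤ k) :
    (∀ b : ℕ, b ≤ k - 2 → mkInv k b = b) ∧ mkInv k (k - 1) = k + 1 := by
  constructor
  · intro b hbk
    have hmem : b ∈ {m : ℕ | ∃ a : (Fin k → ZMod 2) → ℕ,
        (∀ u : Fin k → ZMod 2, u ≠ 0 →
          ∑ v ∈ Finset.univ.filter
            (fun v : Fin k → ZMod 2 => v ≠ 0 ∧ dotProduct u v = 0), a v ≤ b) ∧
        ∑ v ∈ Finset.univ.filter (fun v : Fin k → ZMod 2 => v ≠ 0), a v = m} :=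
      MkAux.mem_small hk b
    have hbound : ∀ m ∈ {m : ℕ | ∃ a : (Fin k → ZMod 2) → ℕ,
        (∀ u : Fin k → ZMod 2, u ≠ 0 →
          ∑ v ∈ Finset.univ.filter
            (fun v : Fin k → ZMod 2 => v ≠ 0 ∧ dotProduct u v = 0), a v ≤ b) ∧
        ∑ v ∈ Finset.univ.filter (fun v : Fin k → ZMod 2 => v ≠ 0), a v = m}, m ≤ b := by
      rintro m ⟨a, h1, h2⟩
      rw [← h2]
      exact MkAux.upper_small hk b hbk a h1
    rw [mkInv]
    exact le_antisymm (csSup_le ⟨b, hmem⟩ hbound) (le_csSup ⟨b, hbound⟩ hmem)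
  · have hmem : k + 1 ∈ {m : ℕ | ∃ a : (Fin k → ZMod 2) → ℕ,
        (∀ u : Fin k → ZMod 2, u ≠ 0 →
          ∑ v ∈ Finset.univ.filter
            (fun v : Fin k → ZMod 2 => v ≠ 0 ∧ dotProduct u v = 0), a v ≤ k - 1) ∧
        ∑ v ∈ Finset.univ.filter (fun v : Fin k → ZMod 2 => v ≠ 0), a v = m} :=
      MkAux.mem_big hk
    have hbound : ∀ m ∈ {m : ℕ | ∃ a : (Fin k → ZMod 2) → ℕ,
        (∀ u : Fin k → ZMod 2, u ≠ 0 →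
          ∑ v ∈ Finset.univ.filter
            (fun v : Fin k → ZMod 2 => v ≠ 0 ∧ dotProduct u v = 0), a v ≤ k - 1) ∧
        ∑ v ∈ Finset.univ.filter (fun v : Fin k → ZMod 2 => v ≠ 0), a v = m}, m ≤ k + 1 := by
      rintro m ⟨a, h1, h2⟩
      rw [← h2]
      exact MkAux.upper_big hk a h1
    rw [mkInv]
    exact le_antisymm (csSup_le ⟨k + 1, hmem⟩ hbound) (le_csSup ⟨k + 1, hbound⟩ hmem)
end

section
/- For k ≥ 5, m_k(k) = k + 2; moreover m_4(4) = 8. Equivalently, for k ≥ 5 there is no k × (k+3) matrix over Z/2 in which every k+1 columns span (Z/2)^k, while there is such a k × (k+2) matrix. -/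
set_option maxHeartbeats 8000000

open Matrix Finset

/-! ### Auxiliary lemmas -/

lemma zmod2_ne_zero : ∀ x : ZMod 2, x ≠ 0 → x = 1 := by decide

lemma zmod2_ne_one : ∀ x : ZMod 2, x ≠ 1 → x = 0 := by decide

lemma span_card {k n : ℕ} (hn : k + 1 ≤ n) (A : Matrix (Fin k) (Fin n) (ZMod 2))
    (hA : SpanProp k n (k+1) A) (u : Fin k → ZMod 2) (hu : u ≠ 0) :
    (univ.filter fun j => dotProduct u (Aᵀ j) = 0).card ≤ k := by
  by_contra hcard
  push_neg at hcard
  obtain ⟨S, hSsub, hScard⟩ := Finset.exists_subset_card_eq hcard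
  have hspan := hA S hScard
  let φ : (Fin k → ZMod 2) →ₗ[ZMod 2] ZMod 2 :=
    { toFun := fun x => dotProduct u x
      map_add' := fun x y => dotProduct_add u x y
      map_smul' := fun c x => by simp [dotProduct_smul] }
  have hker : Submodule.span (ZMod 2) (Aᵀ '' (S : Set (Fin n))) ≤ LinearMap.ker φ := by
    rw [Submodule.span_le]
    rintro x ⟨j, hj, rfl⟩
    have hj' := hSsub hj
    simp only [Finset.mem_filter] at hj'
    simpa [φ, LinearMap.mem_ker] using hj'.2
  rw [hspan, top_le_iff] at hker
  obtain ⟨i, hi⟩ : ∃ i, u i ≠ 0 := by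
    by_contra h; push_neg at h; exact hu (funext fun i => h i)
  have : φ (Pi.single i 1) = 0 := by
    have := LinearMap.ext_iff.mp (LinearMap.ker_eq_top.mp hker) (Pi.single i 1)
    simpa using this
  simp only [φ, LinearMap.coe_mk, AddHom.coe_mk, dotProduct_single, mul_one] at this
  exact hi this

lemma hamming {k : ℕ} (hk : 5 ≤ k) (f : Fin (k+3) → (Fin k → ZMod 2))
    (h3 : ∀ u : Fin k → ZMod 2, u ≠ 0 →
      3 ≤ (univ.filter fun j => dotProduct u (f j) = 1).card) : False := by
  have key : ∀ x y a b : ZMod 2, x + a = y + b → x + y = a + b := by decide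
  have key2 : ∀ x y : ZMod 2, x + y = 1 → x = 1 ∨ y = 1 := by decide
  have key3 : ∀ x y : ZMod 2, x + y = 0 → x = y := by decide
  let E : Option (Fin (k+3)) → (Fin (k+3) → ZMod 2) := fun o =>
    o.elim 0 (fun i => Pi.single i 1)
  have hEcard : ∀ o, (univ.filter fun j => E o j = 1).card ≤ 1 := by
    rintro (_|i)
    · simp [E]
    · refine le_trans (Finset.card_le_card ?_) (by simp : ({i} : Finset (Fin (k+3))).card ≤ 1)
      intro j hj
      rw [Finset.mem_filter] at hj
      simp only [Finset.mem_filter, E, Option.elim] at hj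
      have : j = i := by
        by_contra hne
        rw [Pi.single_apply, if_neg hne] at hj
        exact absurd hj.2 (by decide)
      simp [this]
  let F : (Fin k → ZMod 2) × Option (Fin (k+3)) → (Fin (k+3) → ZMod 2) :=
    fun p => (fun j => dotProduct p.1 (f j)) + E p.2
  have hinj : Function.Injective F := by
    rintro ⟨u, o⟩ ⟨u', o'⟩ h
    have hpt : ∀ j, dotProduct u (f j) + E o j
        = dotProduct u' (f j) + E o' j := fun j => congrFun h j
    have hdd : ∀ j, dotProduct (u + u') (f j) = E o j + E o' j := by
      intro j
      rw [add_dotProduct]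
      exact key _ _ _ _ (hpt j)
    have huu : u = u' := by
      by_contra hne
      have hw : u + u' ≠ 0 := by
        intro h0
        apply hne
        funext i
        exact key3 _ _ (congrFun h0 i)
      have h3' := h3 _ hw
      have hsub : (univ.filter fun j => dotProduct (u+u') (f j) = 1) ⊆
          (univ.filter fun j => E o j = 1) ∪ (univ.filter fun j => E o' j = 1) := by
        intro j hj
        simp only [Finset.mem_filter, Finset.mem_union] at hj ⊢
        rcases key2 _ _ ((hdd j) ▸ hj.2) with h | h
        · exact Or.inl ⟨Finset.mem_univ _, h⟩
        · exact Or.inr ⟨Finset.mem_univ _, h⟩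
      have hc1 := Finset.card_le_card hsub
      have hc2 := Finset.card_union_le (univ.filter fun j => E o j = 1)
        (univ.filter fun j => E o' j = 1)
      have hc3 := hEcard o
      have hc4 := hEcard o'
      omega
    subst huu
    have hE : E o = E o' := by
      funext j
      have := hpt j
      exact add_left_cancel this
    have : o = o' := by
      match o, o' with
      | none, none => rfl
      | none, some i =>
        exfalso
        have h1 := congrFun hE i
        simp only [E, Option.elim, Pi.zero_apply, Pi.single_eq_same] at h1
        exact absurd h1.symm (by decide)
      | some i, none =>
        exfalso
        have h1 := congrFun hE i
        simp only [E, Option.elim, Pi.zero_apply, Pi.single_eq_same] at h1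
        exact absurd h1 (by decide)
      | some i, some i' =>
        congr 1
        by_contra hne
        have h1 := congrFun hE i
        simp only [E, Option.elim, Pi.single_eq_same, Pi.single_apply] at h1
        rw [if_neg hne] at h1
        exact absurd h1 (by decide)
    rw [this]
  have hcard := Fintype.card_le_of_injective F hinj
  have hd : Fintype.card ((Fin k → ZMod 2) × Option (Fin (k+3))) = 2^k * (k+4) := by
    simp [Fintype.card_fun, ZMod.card]
  have hc : Fintype.card (Fin (k+3) → ZMod 2) = 2^(k+3) := by
    simp [Fintype.card_fun, ZMod.card]
  rw [hd, hc, pow_add] at hcard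
  have hpos : 0 < (2:ℕ)^k := Nat.pow_pos (by norm_num)
  have := Nat.le_of_mul_le_mul_left hcard hpos
  have h8 : (2:ℕ)^3 = 8 := by norm_num
  omega

lemma reduce {α : Type*} [DecidableEq α] (s : Finset α) (n : ℕ) :
    ∀ (a : α → ℕ), n ≤ ∑ v ∈ s, a v →
    ∃ a' : α → ℕ, (∀ v, a' v ≤ a v) ∧ (∀ v, v ∉ s → a' v = 0) ∧ ∑ v ∈ s, a' v = n := by
  suffices H : ∀ (d : ℕ) (a : α → ℕ), ∑ v ∈ s, a v = n + d →
      ∃ a' : α → ℕ, (∀ v, a' v ≤ a v) ∧ (∀ v, v ∉ s → a' v = 0) ∧ ∑ v ∈ s, a' v = n by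
    intro a h
    exact H (∑ v ∈ s, a v - n) a (by omega)
  intro d
  induction d with
  | zero =>
    intro a h
    rw [Nat.add_zero] at h
    refine ⟨fun v => if v ∈ s then a v else 0, fun v => ?_, fun v hv => if_neg hv, ?_⟩
    · dsimp only
      split <;> omega
    · exact (Finset.sum_congr rfl fun v hv => if_pos hv).trans h
  | succ d ih =>
    intro a h
    have hpos : ∃ v0 ∈ s, 0 < a v0 := by
      by_contra hc
      push_neg at hc
      have : ∑ v ∈ s, a v = 0 := Finset.sum_eq_zero fun v hv => by have := hc v hv; omega
      omega
    obtain ⟨v0, hv0, hv0pos⟩ := hpos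
    set b : α → ℕ := Function.update a v0 (a v0 - 1) with hb
    have hsum : ∑ v ∈ s, b v = n + d := by
      rw [Finset.sum_update_of_mem hv0]
      have := Finset.add_sum_erase s a hv0
      rw [Finset.sdiff_singleton_eq_erase]
      omega
    obtain ⟨a', h1, h2, h3⟩ := ih b hsum
    refine ⟨a', fun v => ?_, h2, h3⟩
    refine le_trans (h1 v) ?_
    by_cases hv : v = v0
    · subst hv; simp [hb]
    · simp [hb, Function.update_of_ne hv]

lemma cols {k n : ℕ} (a : (Fin k → ZMod 2) → ℕ) (h : ∑ v, a v = n) :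
    ∃ f : Fin n → (Fin k → ZMod 2), ∀ u : Fin k → ZMod 2,
      (univ.filter fun j => dotProduct u (f j) = 1).card
        = ∑ v ∈ univ.filter (fun v => dotProduct u v = 1), a v := by
  have hcard : Fintype.card ((v : Fin k → ZMod 2) × Fin (a v)) = n := by
    simpa [Fintype.card_sigma] using h
  let e := Fintype.equivFinOfCardEq hcard
  refine ⟨fun j => (e.symm j).1, fun u => ?_⟩
  have himg : (univ.filter fun j => dotProduct u ((e.symm j).1) = 1)
      = Finset.image e (univ.filter fun x : (v : Fin k → ZMod 2) × Fin (a v) =>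
          dotProduct u x.1 = 1) := by
    ext j
    simp only [Finset.mem_filter, Finset.mem_image, Finset.mem_univ, true_and]
    constructor
    · intro hj
      exact ⟨e.symm j, hj, e.apply_symm_apply j⟩
    · rintro ⟨x, hx, rfl⟩
      rwa [e.symm_apply_apply]
  rw [himg, Finset.card_image_of_injective _ e.injective]
  have hsig : (univ.filter fun x : (v : Fin k → ZMod 2) × Fin (a v) =>
      dotProduct u x.1 = 1)
      = (univ.filter fun v => dotProduct u v = 1).sigma (fun v => univ) := by
    ext ⟨v, i⟩
    simp [Finset.mem_sigma]
  rw [hsig, Finset.card_sigma]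
  simp

lemma upper_gen {k m : ℕ} (hk : 5 ≤ k) (a : (Fin k → ZMod 2) → ℕ)
    (hcon : ∀ u : Fin k → ZMod 2, u ≠ 0 →
      ∑ v ∈ univ.filter (fun v : Fin k → ZMod 2 => v ≠ 0 ∧ dotProduct u v = 0), a v ≤ k)
    (hsum : ∑ v ∈ univ.filter (fun v : Fin k → ZMod 2 => v ≠ 0), a v = m) :
    m ≤ k + 2 := by
  by_contra hm
  push_neg at hm
  obtain ⟨a', ha'le, ha'0, ha'sum⟩ :=
    reduce (univ.filter (fun v : Fin k → ZMod 2 => v ≠ 0)) (k+3) a (by omega)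
  have htot : ∑ v, a' v = k + 3 := by
    rw [← Finset.sum_filter_add_sum_filter_not univ (fun v : Fin k → ZMod 2 => v ≠ 0) a']
    have hz : ∑ v ∈ univ.filter (fun v : Fin k → ZMod 2 => ¬ v ≠ 0), a' v = 0 :=
      Finset.sum_eq_zero fun v hv => ha'0 v (by
        simp only [Finset.mem_filter, Finset.mem_univ, true_and] at hv ⊢
        tauto)
    omega
  obtain ⟨f, hf⟩ := cols a' htot
  refine hamming hk f (fun u hu => ?_)
  rw [hf u]
  have hsplit := Finset.sum_filter_add_sum_filter_not
    (univ.filter (fun v : Fin k → ZMod 2 => v ≠ 0))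
    (fun v => dotProduct u v = 0) a'
  rw [Finset.filter_filter, Finset.filter_filter] at hsplit
  have h1 : ∑ v ∈ univ.filter
      (fun v : Fin k → ZMod 2 => v ≠ 0 ∧ dotProduct u v = 0), a' v ≤ k :=
    le_trans (Finset.sum_le_sum fun v _ => ha'le v) (hcon u hu)
  have h2 : (univ.filter fun v : Fin k → ZMod 2 => v ≠ 0 ∧ ¬ dotProduct u v = 0)
      = univ.filter (fun v => dotProduct u v = 1) := by
    apply Finset.filter_congr
    intro v _
    constructor
    · rintro ⟨hv0, hd⟩
      exact zmod2_ne_zero _ hd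
    · intro h
      refine ⟨?_, by rw [h]; decide⟩
      intro h0
      rw [h0, dotProduct_zero] at h
      exact absurd h (by decide)
  rw [h2] at hsplit
  omega

lemma part3 {k : ℕ} (hk : 5 ≤ k) :
    ¬ ∃ A : Matrix (Fin k) (Fin (k+3)) (ZMod 2), SpanProp k (k+3) (k+1) A := by
  rintro ⟨A, hA⟩
  refine hamming hk (fun j => Aᵀ j) (fun u hu => ?_)
  show 3 ≤ (univ.filter fun j : Fin (k+3) => dotProduct u (Aᵀ j) = 1).card
  have h0 := span_card (by omega) A hA u hu
  have hsplit := Finset.card_filter_add_card_filter_not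
    (s := (univ : Finset (Fin (k+3)))) (p := fun j => dotProduct u (Aᵀ j) = 0)
  have heq : (univ.filter fun j : Fin (k+3) => ¬ dotProduct u (Aᵀ j) = 0)
      = univ.filter (fun j => dotProduct u (Aᵀ j) = 1) :=
    Finset.filter_congr fun j _ =>
      ⟨fun h => zmod2_ne_zero _ h, fun h => by rw [h]; decide⟩
  rw [heq, Finset.card_univ, Fintype.card_fin] at hsplit
  omega

/-! ### The construction -/

def goodMat (k : ℕ) : Matrix (Fin k) (Fin (k+2)) (ZMod 2) :=
  Matrix.of fun i j => if (j : ℕ) = (i : ℕ) ∨ k ≤ (j : ℕ) then 1 else 0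

lemma goodMat_col_lt {k : ℕ} (i' : Fin k) (j : Fin (k+2)) (hj : (j:ℕ) < k) :
    (goodMat k)ᵀ j i' = if (j:ℕ) = (i':ℕ) then 1 else 0 := by
  simp only [goodMat, Matrix.transpose_apply, Matrix.of_apply]
  by_cases h : (j:ℕ) = (i':ℕ) <;> simp [h, Nat.not_le.mpr hj]

lemma goodMat_col_ge {k : ℕ} (i' : Fin k) (j : Fin (k+2)) (hj : k ≤ (j:ℕ)) :
    (goodMat k)ᵀ j i' = 1 := by
  simp [goodMat, hj]

lemma goodMat_col_ne_zero {k : ℕ} (hk : 0 < k) (j : Fin (k+2)) : (goodMat k)ᵀ j ≠ 0 := by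
  intro h
  by_cases hj : (j:ℕ) < k
  · have := congrFun h ⟨(j:ℕ), hj⟩
    rw [goodMat_col_lt _ _ hj] at this
    simp at this
  · have := congrFun h ⟨0, hk⟩
    rw [goodMat_col_ge _ _ (by omega)] at this
    simp at this

lemma goodMat_spanProp (k : ℕ) (hk : 0 < k) : SpanProp k (k+2) (k+1) (goodMat k) := by
  intro S hS
  have hcompl : Sᶜ.card = 1 := by
    rw [Finset.card_compl, hS]
    simp
  obtain ⟨j0, hj0⟩ := Finset.card_eq_one.mp hcompl
  have hmem : ∀ j : Fin (k+2), j ≠ j0 → j ∈ S := by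
    intro j hj
    by_contra h
    have : j ∈ Sᶜ := Finset.mem_compl.mpr h
    rw [hj0, Finset.mem_singleton] at this
    exact hj this
  rw [eq_top_iff]
  intro x _
  rw [pi_eq_sum_univ x]
  apply Submodule.sum_mem
  intro i _
  apply Submodule.smul_mem
  set e : Fin k → ZMod 2 := fun i' => if i = i' then 1 else 0 with he
  show e ∈ _
  set ci : Fin (k+2) := ⟨(i:ℕ), by omega⟩ with hcidef
  have hcol : (goodMat k)ᵀ ci = e := by
    funext i'
    rw [goodMat_col_lt i' ci (by simp [hcidef]), he]
    simp only [hcidef]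
    by_cases h : i = i'
    · simp [h]
    · rw [if_neg h, if_neg (by simpa [Fin.val_eq_val] using h)]
  by_cases hciS : ci ∈ S
  · exact Submodule.subset_span ⟨ci, by exact_mod_cast hciS, hcol⟩
  · have hj0ci : j0 = ci := by
      by_contra h
      exact hciS (hmem ci (fun hh => h hh.symm))
    set ck : Fin (k+2) := ⟨k, by omega⟩ with hckdef
    have hckS : ck ∈ S := by
      apply hmem
      rw [hj0ci]
      intro h
      have : (ck : ℕ) = (ci : ℕ) := by rw [h]
      simp [hckdef, hcidef] at this
      omega
    have hctS : ∀ t : Fin k, t ≠ i → (⟨(t:ℕ), by omega⟩ : Fin (k+2)) ∈ S := by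
      intro t ht
      apply hmem
      rw [hj0ci]
      intro h
      have : (t:ℕ) = (i:ℕ) := by
        have := congrArg (fun z : Fin (k+2) => (z:ℕ)) h
        simpa [hcidef] using this
      exact ht (Fin.ext this)
    have hdecomp : e = (goodMat k)ᵀ ck
        + ∑ t ∈ univ.filter (· ≠ i), (goodMat k)ᵀ ⟨(t:ℕ), by omega⟩ := by
      funext i'
      have h1 : (goodMat k)ᵀ ck i' = 1 := goodMat_col_ge i' ck (by simp [hckdef])
      have h2 : ∀ t : Fin k, (goodMat k)ᵀ (⟨(t:ℕ), by omega⟩ : Fin (k+2)) i'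
          = if t = i' then 1 else 0 := by
        intro t
        rw [goodMat_col_lt i' _ (by simp)]
        by_cases h : t = i'
        · simp [h]
        · rw [if_neg (by simpa [Fin.val_eq_val] using h), if_neg h]
      simp only [Pi.add_apply, Finset.sum_apply, h1]
      rw [Finset.sum_congr rfl (fun t _ => h2 t)]
      rw [Finset.sum_ite_eq' (univ.filter (· ≠ i)) i' (fun _ => (1 : ZMod 2))]
      simp only [Finset.mem_filter, Finset.mem_univ, true_and, he]
      by_cases h : i = i'
      · simp [h]
      · rw [if_neg h, if_pos (fun hh => h hh.symm)]
        decide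
    rw [hdecomp]
    apply Submodule.add_mem
    · exact Submodule.subset_span ⟨ck, by exact_mod_cast hckS, rfl⟩
    · apply Submodule.sum_mem
      intro t ht
      have ht' : t ≠ i := (Finset.mem_filter.mp ht).2
      exact Submodule.subset_span ⟨⟨(t:ℕ), by omega⟩, by exact_mod_cast hctS t ht', rfl⟩

/-! ### Fiber counting -/

open Classical in
lemma fiber {k n : ℕ} (A : Matrix (Fin k) (Fin n) (ZMod 2)) (T : Finset (Fin k → ZMod 2)) :
    ∑ v ∈ T, (univ.filter fun j => Aᵀ j = v).card
      = (univ.filter fun j => Aᵀ j ∈ T).card := by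
  rw [Finset.card_eq_sum_card_fiberwise
    (f := fun j => Aᵀ j) (s := univ.filter fun j => Aᵀ j ∈ T) (t := T)
    (fun j hj => (Finset.mem_filter.mp (Finset.mem_coe.mp hj)).2)]
  refine Finset.sum_congr rfl fun v hv => ?_
  congr 1
  rw [Finset.filter_filter]
  ext j
  simp only [Finset.mem_filter, Finset.mem_univ, true_and]
  exact
    ⟨fun h => ⟨by show Aᵀ j ∈ T; rw [h]; exact hv, h⟩, fun h => h.2⟩

open Classical in
lemma lower_gen {k : ℕ} (hk : 5 ≤ k) :
    ∃ a : (Fin k → ZMod 2) → ℕ,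
      (∀ u : Fin k → ZMod 2, u ≠ 0 →
        ∑ v ∈ univ.filter
          (fun v : Fin k → ZMod 2 => v ≠ 0 ∧ dotProduct u v = 0), a v ≤ k) ∧
      ∑ v ∈ univ.filter (fun v : Fin k → ZMod 2 => v ≠ 0), a v = k + 2 := by
  have hsp := goodMat_spanProp k (by omega)
  refine ⟨fun v => (univ.filter fun j => (goodMat k)ᵀ j = v).card, fun u hu => ?_, ?_⟩
  · rw [fiber (goodMat k) _]
    refine le_trans (Finset.card_le_card ?_) (span_card (by omega) _ hsp u hu)
    intro j hj
    simp only [Finset.mem_filter, Finset.mem_univ, true_and] at hj ⊢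
    exact hj.2
  · rw [fiber]
    have hall : (univ.filter fun j : Fin (k+2) =>
        (goodMat k)ᵀ j ∈ univ.filter (fun v : Fin k → ZMod 2 => v ≠ 0)) = univ := by
      apply Finset.filter_true_of_mem
      intro j _
      simp only [Finset.mem_filter, Finset.mem_univ, true_and]
      exact goodMat_col_ne_zero (by omega) j
    rw [hall, Finset.card_univ, Fintype.card_fin]

/-! ### The case k = 4 -/

lemma upper4 {m : ℕ} (a : (Fin 4 → ZMod 2) → ℕ)
    (hcon : ∀ u : Fin 4 → ZMod 2, u ≠ 0 →
      ∑ v ∈ univ.filter (fun v => v ≠ 0 ∧ dotProduct u v = 0), a v ≤ 4)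
    (hsum : ∑ v ∈ univ.filter (fun v : Fin 4 → ZMod 2 => v ≠ 0), a v = m) : m ≤ 8 := by
  set U := univ.filter (· ≠ (0 : Fin 4 → ZMod 2)) with hU
  have key : ∀ v : Fin 4 → ZMod 2, v ≠ 0 →
      (U.filter fun u => dotProduct u v = 0).card = 7 := by
    rw [hU]; decide
  have hUcard : U.card = 15 := by rw [hU]; decide
  have hdouble : ∑ u ∈ U, ∑ v ∈ univ.filter
      (fun v => v ≠ 0 ∧ dotProduct u v = 0), a v = 7 * m := by
    have step1 : ∀ u : Fin 4 → ZMod 2, ∑ v ∈ univ.filter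
        (fun v => v ≠ 0 ∧ dotProduct u v = 0), a v
        = ∑ v ∈ univ, if v ≠ 0 ∧ dotProduct u v = 0 then a v else 0 :=
      fun u => Finset.sum_filter _ _
    rw [Finset.sum_congr rfl (fun u _ => step1 u), Finset.sum_comm]
    have step2 : ∀ v : Fin 4 → ZMod 2,
        ∑ u ∈ U, (if v ≠ 0 ∧ dotProduct u v = 0 then a v else 0)
        = (if v ≠ 0 then 7 else 0) * a v := by
      intro v
      rw [← Finset.sum_filter]
      rw [Finset.sum_const, smul_eq_mul]
      by_cases hv : v = 0
      · rw [if_neg (by simp [hv])]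
        have : (U.filter fun u => v ≠ 0 ∧ dotProduct u v = 0) = ∅ := by
          apply Finset.filter_false_of_mem
          intro u _
          simp [hv]
        simp [this]
      · rw [if_pos hv]
        congr 1
        rw [← key v hv]
        congr 1
        exact Finset.filter_congr fun u _ => by simp [hv]
    rw [Finset.sum_congr rfl (fun v _ => step2 v)]
    have hite : ∀ v : Fin 4 → ZMod 2, (if v ≠ 0 then 7 else 0) * a v
        = if v ≠ 0 then 7 * a v else 0 := by
      intro v; split <;> simp
    rw [Finset.sum_congr rfl (fun v _ => hite v), ← Finset.sum_filter, ← hU,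
      ← Finset.mul_sum, hU, hsum]
  have hbound : ∑ u ∈ U, ∑ v ∈ univ.filter
      (fun v => v ≠ 0 ∧ dotProduct u v = 0), a v ≤ 15 * 4 := by
    calc _ ≤ ∑ _u ∈ U, 4 := Finset.sum_le_sum fun u hu =>
            hcon u (by simpa [hU] using hu)
    _ = 15 * 4 := by rw [Finset.sum_const, hUcard]; ring
  omega

def a4 : (Fin 4 → ZMod 2) → ℕ := fun v => if v 0 + v 1 + v 2 + v 3 = 1 then 1 else 0

set_option maxHeartbeats 8000000 in
lemma a4_con : ∀ u : Fin 4 → ZMod 2, u ≠ 0 →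
    ∑ v ∈ univ.filter
      (fun v : Fin 4 → ZMod 2 => v ≠ 0 ∧ dotProduct u v = 0), a4 v ≤ 4 := by
  decide

set_option maxHeartbeats 8000000 in
lemma a4_sum : ∑ v ∈ univ.filter (fun v : Fin 4 → ZMod 2 => v ≠ 0), a4 v = 8 := by decide

/-! ### Main theorem -/

theorem mkInv_at_k (k : ℕ) (hk : 5 ≤ k) :
    mkInv k k = k + 2 ∧ mkInv 4 4 = 8 ∧
    (¬ ∃ A : Matrix (Fin k) (Fin (k + 3)) (ZMod 2), SpanProp k (k + 3) (k + 1) A) ∧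
    (∃ A : Matrix (Fin k) (Fin (k + 2)) (ZMod 2), SpanProp k (k + 2) (k + 1) A) := by
  refine ⟨?_, ?_, part3 hk, ⟨goodMat k, goodMat_spanProp k (by omega)⟩⟩
  · unfold mkInv
    apply le_antisymm
    · apply csSup_le
      · exact ⟨0, ⟨fun _ => 0, fun u hu => by simp, by simp⟩⟩
      · rintro m ⟨a, hcon, hsum⟩
        exact upper_gen hk a hcon hsum
    · apply le_csSup
      · refine ⟨k + 2, ?_⟩
        rintro m ⟨a, hcon, hsum⟩
        exact upper_gen hk a hcon hsum
      · obtain ⟨a, h1, h2⟩ := lower_gen hk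
        exact ⟨a, h1, h2⟩
  · unfold mkInv
    apply le_antisymm
    · apply csSup_le
      · exact ⟨0, ⟨fun _ => 0, fun u hu => by simp, by simp⟩⟩
      · rintro m ⟨a, hcon, hsum⟩
        exact upper4 a hcon hsum
    · apply le_csSup
      · refine ⟨8, ?_⟩
        rintro m ⟨a, hcon, hsum⟩
        exact upper4 a hcon hsum
      · exact ⟨a4, a4_con, a4_sum⟩
end
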